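/- arXiv:2010.05526 — 4 statements merged into one kernel-verified Lean document; each statement's English description precedes it below -/
import Mathlib

section
/- Fix an integer d ≥ 2 and a probability measure G on [0,∞) with bounded support. The map I : ℝ^d → [0,∞] is lower semi-continuous: for every v ∈ ℝ^d and every sequence (v_p)_{p≥1} in ℝ^d converging to v, one has liminf_{p→∞} I(v_p) ≥ I(v). -/
open MeasureTheory Filter Set
open scoped ENNReal Topology

namespace FPP

/-- `ℝ^d`, with Lebesgue measure `volume`. -/
abbrev Rd (d : ℕ) := Fin d → ℝ

/-- The Euclidean (ℓ²) norm on `Rd d`. -/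
noncomputable def nrm2 {d : ℕ} (v : Rd d) : ℝ := Real.sqrt (∑ i, v i ^ 2)

/-- An edge of the rescaled lattice `𝔼_n^d`, encoded by the integer coordinates of its left
endpoint together with its direction: the edge `(z, i)` of `𝔼_n^d` joins `z/n` to `z/n + eᵢ/n`. -/
abbrev Edge (d : ℕ) := (Fin d → ℤ) × Fin d

/-- The point `z / n` of the rescaled lattice `ℤ_n^d`. -/
noncomputable def pt {d : ℕ} (n : ℕ) (z : Fin d → ℤ) : Rd d := fun i => (z i : ℝ) / n

/-- `z + eᵢ` -/
def shift {d : ℕ} (z : Fin d → ℤ) (i : Fin d) : Fin d → ℤ := fun j => z j + if j = i then 1 else 0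

/-- `z - eᵢ` -/
def unshift {d : ℕ} (z : Fin d → ℤ) (i : Fin d) : Fin d → ℤ := fun j => z j - if j = i then 1 else 0

/-- the `i`-th vector of the canonical basis of `ℝ^d` -/
noncomputable def bvec {d : ℕ} (i : Fin d) : Rd d := fun j => if j = i then 1 else 0

/-- the center `c(e)` of an edge of `𝔼_n^d` -/
noncomputable def center {d : ℕ} (n : ℕ) (e : Edge d) : Rd d :=
  fun j => ((e.1 j : ℝ) + if j = e.2 then 1 / 2 else 0) / n

/-- A stream `f_n : 𝔼_n^d → ℝ^d`, encoded by its signed intensity `F e` along each edge `e`: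
the vector value of the stream on `e` is `F e • bvec e.2`, automatically collinear with `e`. -/
abbrev Streamm (d : ℕ) := Edge d → ℝ

/-- the vector value `f_n(e)` of a stream on an edge -/
noncomputable def streamVec {d : ℕ} (F : Streamm d) (e : Edge d) : Rd d := F e • bvec e.2

/-- The vector measure `μ_n(f_n) = n^{-d} ∑_e f_n(e) δ_{c(e)}` of a stream, as an
`ℝ^d`-valued set function. -/
noncomputable def streamMeas {d : ℕ} (n : ℕ) (F : Streamm d) : Set (Rd d) → Rd d :=
  fun A => ∑' e : Edge d, Set.indicator A (fun _ => ((n : ℝ) ^ d)⁻¹ • streamVec F e) (center n e)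

/-- The node law at the lattice point `z/n` (scale invariant, hence stated on `ℤ^d`). -/
def nodeLaw {d : ℕ} (F : Streamm d) (z : Fin d → ℤ) : Prop :=
  ∑ i : Fin d, (F (z, i) - F (unshift z i, i)) = 0

/-- Membership in the set `S_n(C)` of admissible streams through `C` (without prescribed sinks
and sources), for the capacities `c` : the capacity constraint `‖f_n(e)‖₂ ≤ t(e)` holds for
every edge whose left endpoint belongs to `C`, and the node law holds at every vertex `x` of
`ℤ_n^d ∩ C` such that `x - eᵢ/n ∈ C` for every `i`. -/
def memSnSet {d : ℕ} (n : ℕ) (c : Edge d → ℝ) (C : Set (Rd d)) (F : Streamm d) : Prop :=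
  (∀ e : Edge d, pt n e.1 ∈ C → |F e| ≤ c e) ∧
  (∀ z : Fin d → ℤ, pt n z ∈ C → (∀ i : Fin d, pt n (unshift z i) ∈ C) → nodeLaw F z)

/-- The translated dyadic cube `Q + x`, where `Q ∈ Δ_λ^k` is indexed by `w ∈ ℤ^d`,
`Q = 2^{-k} λ ([-1/2,1/2)^d + w)`. -/
def dyadicCube {d : ℕ} (k : ℕ) (lam : ℝ) (w : Fin d → ℤ) (x : Rd d) : Set (Rd d) :=
  {y | ∀ i, lam * (2 : ℝ)⁻¹ ^ k * ((w i : ℝ) - 1 / 2) + x i ≤ y i ∧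
            y i < lam * (2 : ℝ)⁻¹ ^ k * ((w i : ℝ) + 1 / 2) + x i}

/-- The distance `𝔡` between two `ℝ^d`-valued set functions, with values in `[0,∞]`. -/
noncomputable def ddist {d : ℕ} (ν μ : Set (Rd d) → Rd d) : ℝ≥0∞ :=
  ⨆ (x : Rd d) (_ : ∀ i, -1 ≤ x i ∧ x i < 1) (lam : ℝ) (_ : 1 ≤ lam ∧ lam ≤ 2),
    ∑' k : ℕ, (2 : ℝ≥0∞)⁻¹ ^ k *
      ∑' w : Fin d → ℤ,
        ENNReal.ofReal (nrm2 (μ (dyadicCube k lam w x) - ν (dyadicCube k lam w x)))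

/-- the restriction `ν 𝟙_A` of an `ℝ^d`-valued set function to `A` -/
def restr {d : ℕ} (ν : Set (Rd d) → Rd d) (A : Set (Rd d)) : Set (Rd d) → Rd d :=
  fun S => ν (S ∩ A)

/-- the half-open unit cube `𝔠 = [-1/2, 1/2)^d` -/
def unitCube (d : ℕ) : Set (Rd d) := {y | ∀ i, -(1 / 2 : ℝ) ≤ y i ∧ y i < 1 / 2}

/-- The `ℝ^d`-valued measure `σ ℒ^d` with density `σ` w.r.t. Lebesgue measure,
as a set function. -/
noncomputable def densMeas {d : ℕ} (σ : Rd d → Rd d) : Set (Rd d) → Rd d :=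
  fun A => ∫ y in A, σ y

/-- the sequence `n ↦ n^{-d} log P(∃ f_n ∈ S_n(𝔠) : 𝔡(μ_n(f_n)𝟙_𝔠, w 𝟙_𝔠 ℒ^d) ≤ ε)`,
with values in `[-∞, ∞]` -/
noncomputable def cubeSeq (d : ℕ) {Ω' : Type*} [MeasurableSpace Ω'] (P : Measure Ω')
    (t : Edge d → Ω' → ℝ) (w : Rd d) (ε : ℝ) (n : ℕ) : EReal :=
  ((((n : ℝ) ^ d)⁻¹ : ℝ) : EReal) *
    ENNReal.log (P {ω | ∃ F : Streamm d, memSnSet n (fun e => t e ω) (unitCube d) F ∧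
      ddist (restr (streamMeas n F) (unitCube d))
        (densMeas (Set.indicator (unitCube d) fun _ => w)) ≤ ENNReal.ofReal ε})

/-- The elementary rate function `I(w) ∈ [0,∞]`: the monotone limit, as `ε → 0`, of
`- limsup_n n^{-d} log P(∃ f_n ∈ S_n(𝔠) : 𝔡(μ_n(f_n)𝟙_𝔠, w 𝟙_𝔠 ℒ^d) ≤ ε)`. -/
noncomputable def Ielem (d : ℕ) {Ω' : Type*} [MeasurableSpace Ω'] (P : Measure Ω')
    (t : Edge d → Ω' → ℝ) (w : Rd d) : EReal :=
  ⨆ (ε : ℝ) (_ : 0 < ε), -Filter.limsup (cubeSeq d P t w ε) Filter.atTop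


section Aux

variable {d : ℕ}

lemma nrm2_eq_norm (v : Rd d) :
    nrm2 v = ‖(WithLp.toLp 2 v : EuclideanSpace ℝ (Fin d))‖ := by
  rw [EuclideanSpace.norm_eq]
  unfold nrm2
  congr 1
  refine Finset.sum_congr rfl fun i _ => ?_
  simp [Real.norm_eq_abs, sq_abs]

lemma nrm2_sub_le (a b c : Rd d) : nrm2 (a - b) ≤ nrm2 (a - c) + nrm2 (c - b) := by
  rw [nrm2_eq_norm, nrm2_eq_norm, nrm2_eq_norm]
  rw [WithLp.toLp_sub, WithLp.toLp_sub, WithLp.toLp_sub]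
  exact norm_sub_le_norm_sub_add_norm_sub (WithLp.toLp 2 a : EuclideanSpace ℝ (Fin d))
    (WithLp.toLp 2 c : EuclideanSpace ℝ (Fin d)) (WithLp.toLp 2 b : EuclideanSpace ℝ (Fin d))

lemma nrm2_smul (c : ℝ) (v : Rd d) : nrm2 (c • v) = |c| * nrm2 v := by
  rw [nrm2_eq_norm, nrm2_eq_norm, ← Real.norm_eq_abs]
  rw [WithLp.toLp_smul]
  exact norm_smul c (WithLp.toLp 2 v : EuclideanSpace ℝ (Fin d))

lemma dyadicCube_eq (k : ℕ) (lam : ℝ) (w : Fin d → ℤ) (x : Rd d) :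
    dyadicCube k lam w x = Set.pi Set.univ (fun i =>
      Set.Ico (lam * (2:ℝ)⁻¹ ^ k * ((w i : ℝ) - 1/2) + x i)
              (lam * (2:ℝ)⁻¹ ^ k * ((w i : ℝ) + 1/2) + x i)) := by
  ext y; simp [dyadicCube, Set.mem_pi]

lemma measurableSet_dyadicCube (k : ℕ) (lam : ℝ) (w : Fin d → ℤ) (x : Rd d) :
    MeasurableSet (dyadicCube k lam w x) := by
  rw [dyadicCube_eq]
  exact MeasurableSet.univ_pi fun i => measurableSet_Ico

lemma unitCube_eq : unitCube d = Set.pi Set.univ (fun _ => Set.Ico (-(1/2) : ℝ) (1/2)) := by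
  ext y; simp [unitCube, Set.mem_pi]

lemma measurableSet_unitCube : MeasurableSet (unitCube d) := by
  rw [unitCube_eq]
  exact MeasurableSet.univ_pi fun _ => measurableSet_Ico

lemma volume_unitCube : volume (unitCube d) = 1 := by
  rw [unitCube_eq, volume_pi_pi]
  norm_num

lemma dyadicCube_disjoint {k : ℕ} {lam : ℝ} (hlam : 1 ≤ lam) (x : Rd d) :
    Pairwise (Function.onFun Disjoint fun w : Fin d → ℤ => dyadicCube k lam w x) := by
  intro w w' hne
  rw [Function.onFun, Set.disjoint_left]
  intro y hy hy'
  apply hne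
  funext i
  have hl0 : (0:ℝ) < lam := lt_of_lt_of_le one_pos hlam
  have hs : (0:ℝ) < lam * (2:ℝ)⁻¹ ^ k := by positivity
  have h1 := hy i
  have h2 := hy' i
  have hA : lam * (2:ℝ)⁻¹ ^ k * ((w i : ℝ) - 1/2) < lam * (2:ℝ)⁻¹ ^ k * ((w' i : ℝ) + 1/2) := by
    linarith [h1.1, h2.2]
  have hB : lam * (2:ℝ)⁻¹ ^ k * ((w' i : ℝ) - 1/2) < lam * (2:ℝ)⁻¹ ^ k * ((w i : ℝ) + 1/2) := by
    linarith [h2.1, h1.2]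
  have hA' : ((w i : ℝ) - 1/2) < ((w' i : ℝ) + 1/2) := (mul_lt_mul_iff_right₀ hs).mp hA
  have hB' : ((w' i : ℝ) - 1/2) < ((w i : ℝ) + 1/2) := (mul_lt_mul_iff_right₀ hs).mp hB
  have hA'' : w i < w' i + 1 := by exact_mod_cast (by push_cast; linarith : ((w i : ℝ)) < ((w' i : ℤ) : ℝ) + 1)
  have hB'' : w' i < w i + 1 := by exact_mod_cast (by push_cast; linarith : ((w' i : ℝ)) < ((w i : ℤ) : ℝ) + 1)
  omega

lemma tsum_volume_inter_le {k : ℕ} {lam : ℝ} (hlam : 1 ≤ lam) (x : Rd d) :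
    ∑' w : Fin d → ℤ, volume (dyadicCube k lam w x ∩ unitCube d) ≤ 1 := by
  have hd : Pairwise (Function.onFun Disjoint
      fun w : Fin d → ℤ => dyadicCube k lam w x ∩ unitCube d) := fun w w' h =>
    (dyadicCube_disjoint hlam x h).mono Set.inter_subset_left Set.inter_subset_left
  rw [← measure_iUnion hd fun w => (measurableSet_dyadicCube k lam w x).inter measurableSet_unitCube]
  calc volume (⋃ w : Fin d → ℤ, dyadicCube k lam w x ∩ unitCube d)
      ≤ volume (unitCube d) := measure_mono (Set.iUnion_subset fun w => Set.inter_subset_right)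
    _ = 1 := volume_unitCube

lemma densMeas_indicator_apply (v : Rd d) (Q : Set (Rd d)) :
    densMeas (Set.indicator (unitCube d) fun _ => v) Q
      = (volume (Q ∩ unitCube d)).toReal • v := by
  unfold densMeas
  rw [setIntegral_indicator measurableSet_unitCube, setIntegral_const]
  rfl

lemma ddist_le (μ : Set (Rd d) → Rd d) (v v' : Rd d) :
    ddist μ (densMeas (Set.indicator (unitCube d) fun _ => v))
      ≤ ddist μ (densMeas (Set.indicator (unitCube d) fun _ => v'))
        + 2 * ENNReal.ofReal (nrm2 (v - v')) := by
  set A := densMeas (Set.indicator (unitCube d) fun _ => v') with hA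
  set B := densMeas (Set.indicator (unitCube d) fun _ => v) with hB
  set D := nrm2 (v - v') with hD
  conv_lhs => unfold ddist
  refine iSup_le fun x => iSup_le fun hx => iSup_le fun lam => iSup_le fun hlam => ?_
  have hvol : ∀ Q : Set (Rd d), volume (Q ∩ unitCube d) ≠ ⊤ := fun Q =>
    ((measure_mono Set.inter_subset_right).trans_lt
      (by rw [volume_unitCube]; exact ENNReal.one_lt_top)).ne
  have hBA : ∀ Q : Set (Rd d),
      ENNReal.ofReal (nrm2 (B Q - A Q))
        = volume (Q ∩ unitCube d) * ENNReal.ofReal D := by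
    intro Q
    rw [hB, hA, densMeas_indicator_apply, densMeas_indicator_apply, ← smul_sub,
      nrm2_smul, abs_of_nonneg ENNReal.toReal_nonneg,
      ENNReal.ofReal_mul ENNReal.toReal_nonneg, ENNReal.ofReal_toReal (hvol Q), hD]
  have key : ∀ Q : Set (Rd d),
      ENNReal.ofReal (nrm2 (B Q - μ Q))
        ≤ ENNReal.ofReal (nrm2 (A Q - μ Q)) + ENNReal.ofReal (nrm2 (B Q - A Q)) := by
    intro Q
    calc ENNReal.ofReal (nrm2 (B Q - μ Q))
        ≤ ENNReal.ofReal (nrm2 (B Q - A Q) + nrm2 (A Q - μ Q)) :=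
          ENNReal.ofReal_le_ofReal (nrm2_sub_le _ _ _)
      _ ≤ ENNReal.ofReal (nrm2 (B Q - A Q)) + ENNReal.ofReal (nrm2 (A Q - μ Q)) :=
          ENNReal.ofReal_add_le
      _ = _ := add_comm _ _
  calc ∑' k : ℕ, (2:ℝ≥0∞)⁻¹ ^ k * ∑' w : Fin d → ℤ,
          ENNReal.ofReal (nrm2 (B (dyadicCube k lam w x) - μ (dyadicCube k lam w x)))
      ≤ ∑' k : ℕ, (2:ℝ≥0∞)⁻¹ ^ k *
          ((∑' w : Fin d → ℤ,
            ENNReal.ofReal (nrm2 (A (dyadicCube k lam w x) - μ (dyadicCube k lam w x))))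
          + ∑' w : Fin d → ℤ,
            ENNReal.ofReal (nrm2 (B (dyadicCube k lam w x) - A (dyadicCube k lam w x)))) := by
        refine ENNReal.tsum_le_tsum fun k => mul_le_mul_right ?_ _
        rw [← ENNReal.tsum_add]
        exact ENNReal.tsum_le_tsum fun w => key _
    _ = (∑' k : ℕ, (2:ℝ≥0∞)⁻¹ ^ k * ∑' w : Fin d → ℤ,
            ENNReal.ofReal (nrm2 (A (dyadicCube k lam w x) - μ (dyadicCube k lam w x))))
        + ∑' k : ℕ, (2:ℝ≥0∞)⁻¹ ^ k * ∑' w : Fin d → ℤ,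
            ENNReal.ofReal (nrm2 (B (dyadicCube k lam w x) - A (dyadicCube k lam w x))) := by
        rw [← ENNReal.tsum_add]
        exact tsum_congr fun k => mul_add _ _ _
    _ ≤ ddist μ A + 2 * ENNReal.ofReal D := by
        refine add_le_add ?_ ?_
        · unfold ddist
          exact le_iSup_of_le x (le_iSup_of_le hx (le_iSup_of_le lam (le_iSup_of_le hlam le_rfl)))
        · calc ∑' k : ℕ, (2:ℝ≥0∞)⁻¹ ^ k * ∑' w : Fin d → ℤ,
                ENNReal.ofReal (nrm2 (B (dyadicCube k lam w x) - A (dyadicCube k lam w x)))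
              ≤ ∑' k : ℕ, (2:ℝ≥0∞)⁻¹ ^ k * ENNReal.ofReal D := by
                refine ENNReal.tsum_le_tsum fun k => mul_le_mul_right ?_ _
                calc ∑' w : Fin d → ℤ,
                      ENNReal.ofReal (nrm2 (B (dyadicCube k lam w x) - A (dyadicCube k lam w x)))
                    = ∑' w : Fin d → ℤ,
                        volume (dyadicCube k lam w x ∩ unitCube d) * ENNReal.ofReal D := by
                      exact tsum_congr fun w => hBA _
                  _ = (∑' w : Fin d → ℤ,
                        volume (dyadicCube k lam w x ∩ unitCube d)) * ENNReal.ofReal D :=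
                      ENNReal.tsum_mul_right
                  _ ≤ 1 * ENNReal.ofReal D :=
                      mul_le_mul_left (tsum_volume_inter_le hlam.1 x) _
                  _ = ENNReal.ofReal D := one_mul _
            _ = (∑' k : ℕ, (2:ℝ≥0∞)⁻¹ ^ k) * ENNReal.ofReal D := ENNReal.tsum_mul_right
            _ = 2 * ENNReal.ofReal D := by
                rw [ENNReal.tsum_geometric, ENNReal.one_sub_inv_two, inv_inv]

end Aux

/-- Proposition 3.4, lower semicontinuity of the elementary rate function.
Fix `d ≥ 2` and a probability measure `G` on `[0,∞)` with bounded support; let the capacities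
be i.i.d. with law `G`.  The map `I : ℝ^d → [0,∞]` is lower semi-continuous: for every
`v ∈ ℝ^d` and every sequence `(v_p)` converging to `v`, `liminf_p I(v_p) ≥ I(v)`. -/
theorem statement2
    (d : ℕ) (hd : 2 ≤ d)
    (G : Measure ℝ) (hGprob : IsProbabilityMeasure G)
    (hGnonneg : G (Set.Iio 0) = 0) (hGbdd : ∃ b : ℝ, G (Set.Ici b) = 0)
    {Ω' : Type*} [MeasurableSpace Ω'] (P : Measure Ω') (hP : IsProbabilityMeasure P)
    (t : Edge d → Ω' → ℝ) (hmeas : ∀ e, Measurable (t e))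
    (hlaw : ∀ e, P.map (t e) = G)
    (hindep : ProbabilityTheory.iIndepFun t P)
    (v : Rd d) (vseq : ℕ → Rd d) (hconv : Filter.Tendsto vseq Filter.atTop (nhds v)) :
    Ielem d P t v ≤ Filter.liminf (fun p => Ielem d P t (vseq p)) Filter.atTop := by
  unfold Ielem
  refine iSup_le fun ε => iSup_le fun hε => ?_
  have hc : Continuous fun u : Rd d => nrm2 u := by
    unfold nrm2
    exact (continuous_finset_sum _ fun i _ => (continuous_apply i).pow 2).sqrt
  have hten : Filter.Tendsto (fun p => nrm2 (v - vseq p)) Filter.atTop (nhds 0) := by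
    have h0 : Filter.Tendsto (fun p => v - vseq p) Filter.atTop (nhds 0) := by
      simpa using ((tendsto_const_nhds : Filter.Tendsto (fun _ : ℕ => v) Filter.atTop (nhds v)).sub hconv)
    have h1 := (hc.tendsto 0).comp h0
    have h2 : nrm2 (0 : Rd d) = 0 := by simp [nrm2]
    rw [Function.comp_def] at h1
    rwa [h2] at h1
  have hev : ∀ᶠ p in Filter.atTop, nrm2 (v - vseq p) < ε / 8 :=
    hten.eventually_lt_const (by positivity)
  refine Filter.le_liminf_of_le (by isBoundedDefault) ?_
  filter_upwards [hev] with p hp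
  have hnn : 0 ≤ nrm2 (v - vseq p) := Real.sqrt_nonneg _
  have hb : nrm2 (v - vseq p) ≤ ε / 4 := le_of_lt (lt_of_lt_of_le hp (by linarith))
  have h2 : 2 * ENNReal.ofReal (nrm2 (v - vseq p)) ≤ ENNReal.ofReal (ε / 2) := by
    calc 2 * ENNReal.ofReal (nrm2 (v - vseq p))
        ≤ 2 * ENNReal.ofReal (ε / 4) := mul_le_mul_right (ENNReal.ofReal_le_ofReal hb) _
      _ = ENNReal.ofReal (ε / 2) := by
          rw [← ENNReal.ofReal_ofNat, ← ENNReal.ofReal_mul (by norm_num)]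
          congr 1
          ring
  have hdd : ∀ μ : Set (Rd d) → Rd d,
      ddist μ (densMeas (Set.indicator (unitCube d) fun _ => v))
        ≤ ddist μ (densMeas (Set.indicator (unitCube d) fun _ => vseq p))
          + ENNReal.ofReal (ε / 2) :=
    fun μ => (ddist_le μ v (vseq p)).trans (add_le_add_right h2 _)
  have hsub : ∀ n : ℕ,
      {ω | ∃ F : Streamm d, memSnSet n (fun e => t e ω) (unitCube d) F ∧
        ddist (restr (streamMeas n F) (unitCube d))
          (densMeas (Set.indicator (unitCube d) fun _ => vseq p)) ≤ ENNReal.ofReal (ε / 2)}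
      ⊆ {ω | ∃ F : Streamm d, memSnSet n (fun e => t e ω) (unitCube d) F ∧
        ddist (restr (streamMeas n F) (unitCube d))
          (densMeas (Set.indicator (unitCube d) fun _ => v)) ≤ ENNReal.ofReal ε} := by
    rintro n ω ⟨F, hF1, hF2⟩
    refine ⟨F, hF1, (hdd _).trans ?_⟩
    calc ddist (restr (streamMeas n F) (unitCube d))
          (densMeas (Set.indicator (unitCube d) fun _ => vseq p)) + ENNReal.ofReal (ε / 2)
        ≤ ENNReal.ofReal (ε / 2) + ENNReal.ofReal (ε / 2) := add_le_add_left hF2 _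
      _ = ENNReal.ofReal ε := by
          rw [← ENNReal.ofReal_add (by positivity) (by positivity)]
          norm_num
  have hseq : ∀ n : ℕ, cubeSeq d P t (vseq p) (ε / 2) n ≤ cubeSeq d P t v ε n := by
    intro n
    unfold cubeSeq
    refine mul_le_mul_of_nonneg_left ?_ ?_
    · exact ENNReal.log_monotone (measure_mono (hsub n))
    · exact EReal.coe_nonneg.mpr (by positivity)
  have hlim : Filter.limsup (cubeSeq d P t (vseq p) (ε / 2)) Filter.atTop
      ≤ Filter.limsup (cubeSeq d P t v ε) Filter.atTop :=
    Filter.limsup_le_limsup (Filter.Eventually.of_forall hseq)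
  have hneg : -Filter.limsup (cubeSeq d P t v ε) Filter.atTop
      ≤ -Filter.limsup (cubeSeq d P t (vseq p) (ε / 2)) Filter.atTop :=
    EReal.neg_le_neg_iff.mpr hlim
  refine hneg.trans ?_
  exact le_iSup_of_le (ε / 2) (le_iSup_of_le (by positivity) le_rfl)

end FPP
end

section
/- Fix an integer d ≥ 2 and a probability measure G on [0,∞) with bounded support. Let σ ∈ L^∞(ℝ^d → ℝ^d). Let ε > 0, let n ≥ 1, let x ∈ ℤ_n^d, let 1 ≤ n₀ ≤ n and set δ = n₀/n. Then π_{x,δ} maps ℤ_{n₀}^d bijectively onto ℤ_n^d and induces a bijection from 𝔼_{n₀}^d to 𝔼_n^d, and P(∃ f_n ∈ S_n(π_{x,δ}(𝔠)) : 𝔡(μ_n(f_n), σ𝟙_{π_{x,δ}(𝔠)} L^d) ≤ (1/2)(n₀/n)^{d+1} ε) ≤ P(∃ f_{n₀} ∈ S_{n₀}(𝔠) : 𝔡(μ_{n₀}(f_{n₀}), (σ∘π_{x,δ})𝟙_𝔠 L^d) ≤ ε). -/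
open MeasureTheory Filter Set
open scoped ENNReal Topology

namespace FPP

/-- the homothety `π_{x,α} : y ↦ α y + x` -/
def homoth {d : ℕ} (x : Rd d) (α : ℝ) : Rd d → Rd d := fun y => α • y + x

section Basic
variable {d : ℕ}

lemma nrm2_nonneg (v : Rd d) : 0 ≤ nrm2 v := Real.sqrt_nonneg _

lemma abs_le_nrm2 (v : Rd d) (i : Fin d) : |v i| ≤ nrm2 v := by
  rw [← Real.sqrt_sq_eq_abs]
  apply Real.sqrt_le_sqrt
  exact Finset.single_le_sum (f := fun j => v j ^ 2) (fun j _ => sq_nonneg _) (Finset.mem_univ i)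

lemma continuous_nrm2 : Continuous (nrm2 (d := d)) := by
  unfold nrm2
  exact Real.continuous_sqrt.comp (continuous_finset_sum _ fun i _ =>
    ((continuous_apply i).pow 2))

lemma homoth_injective {x : Rd d} {α : ℝ} (hα : α ≠ 0) : Function.Injective (homoth x α) := by
  intro a b hab
  have : α • a = α • b := by
    have := congrArg (fun y => y - x) hab
    simpa [homoth] using this
  exact smul_right_injective _ hα this

lemma homoth_mem_image_iff {x : Rd d} {α : ℝ} (hα : α ≠ 0) {S : Set (Rd d)} {y : Rd d} :
    homoth x α y ∈ homoth x α '' S ↔ y ∈ S :=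
  (homoth_injective hα).mem_set_image

lemma homoth_apply (x : Rd d) (α : ℝ) (y : Rd d) (i : Fin d) :
    homoth x α y i = α * y i + x i := rfl

lemma homoth_surj {x : Rd d} {α : ℝ} (hα : α ≠ 0) (u : Rd d) :
    homoth x α (α⁻¹ • (u - x)) = u := by
  funext i
  simp [homoth_apply, Pi.smul_apply, smul_eq_mul, Pi.sub_apply]
  field_simp
  ring

end Basic

section Lattice
variable {d : ℕ} {n n₀ : ℕ}

/-- the edge translation `(z,i) ↦ (z+w, i)` -/
def edgeShift (w : Fin d → ℤ) : Edge d ≃ Edge d :=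
  (Equiv.addRight w).prodCongr (Equiv.refl (Fin d))

@[simp] lemma edgeShift_apply (w : Fin d → ℤ) (e : Edge d) :
    edgeShift w e = (e.1 + w, e.2) := rfl

lemma pt_homoth (hn₀ : 1 ≤ n₀) (hn : n₀ ≤ n) (w z : Fin d → ℤ) :
    homoth (pt n w) ((n₀ : ℝ) / n) (pt n₀ z) = pt n (z + w) := by
  have hn₀' : (n₀ : ℝ) ≠ 0 := Nat.cast_ne_zero.mpr (by omega)
  have hn' : (n : ℝ) ≠ 0 := Nat.cast_ne_zero.mpr (by omega)
  funext i
  simp only [homoth_apply, pt, Pi.add_apply, Int.cast_add]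
  field_simp

lemma center_homoth (hn₀ : 1 ≤ n₀) (hn : n₀ ≤ n) (w : Fin d → ℤ) (e : Edge d) :
    homoth (pt n w) ((n₀ : ℝ) / n) (center n₀ e) = center n (edgeShift w e) := by
  have hn₀' : (n₀ : ℝ) ≠ 0 := Nat.cast_ne_zero.mpr (by omega)
  have hn' : (n : ℝ) ≠ 0 := Nat.cast_ne_zero.mpr (by omega)
  funext i
  simp only [homoth_apply, center, pt, edgeShift_apply, Pi.add_apply, Int.cast_add]
  field_simp
  by_cases h : i = e.2 <;> simp [h] <;> ring

lemma unshift_add (z w : Fin d → ℤ) (i : Fin d) :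
    unshift (z + w) i = unshift z i + w := by
  funext j; simp [unshift]; ring

lemma shift_add (z w : Fin d → ℤ) (i : Fin d) :
    shift (z + w) i = shift z i + w := by
  funext j; simp [shift]; ring

lemma nodeLaw_edgeShift (F : Streamm d) (w z : Fin d → ℤ) :
    nodeLaw (fun e => F (edgeShift w e)) z ↔ nodeLaw F (z + w) := by
  unfold nodeLaw
  refine Eq.congr ?_ rfl
  apply Finset.sum_congr rfl
  intro i _
  simp [unshift_add]

end Lattice


section Cube
variable {d : ℕ}

lemma dyadicCube_eq_pi (k : ℕ) (lam : ℝ) (w : Fin d → ℤ) (x : Rd d) :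
    dyadicCube k lam w x = Set.pi Set.univ (fun i =>
      Set.Ico (lam * (2 : ℝ)⁻¹ ^ k * ((w i : ℝ) - 1 / 2) + x i)
              (lam * (2 : ℝ)⁻¹ ^ k * ((w i : ℝ) + 1 / 2) + x i)) := by
  ext y; simp [dyadicCube, Set.mem_pi, Set.mem_Ico]

lemma volume_dyadicCube (k : ℕ) {lam : ℝ} (hlam : 0 ≤ lam) (w : Fin d → ℤ) (x : Rd d) :
    volume (dyadicCube k lam w x) = ENNReal.ofReal ((lam * (2:ℝ)⁻¹ ^ k) ^ d) := by
  rw [dyadicCube_eq_pi, volume_pi_pi]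
  have : ∀ i : Fin d, (volume (Set.Ico (lam * (2 : ℝ)⁻¹ ^ k * ((w i : ℝ) - 1 / 2) + x i)
      (lam * (2 : ℝ)⁻¹ ^ k * ((w i : ℝ) + 1 / 2) + x i)) : ℝ≥0∞)
      = ENNReal.ofReal (lam * (2:ℝ)⁻¹ ^ k) := by
    intro i; rw [Real.volume_Ico]; congr 1; ring
  simp only [this, Finset.prod_const, Finset.card_univ, Fintype.card_fin]
  rw [← ENNReal.ofReal_pow (by positivity)]

/-- cubes are bounded coordinatewise -/
lemma dyadicCube_subset_box (k : ℕ) {lam : ℝ} (hlam : lam ≤ 2) (w : Fin d → ℤ) (x : Rd d) :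
    ∀ y ∈ dyadicCube k lam w x, ∀ i,
      lam * (2 : ℝ)⁻¹ ^ k * ((w i : ℝ) - 1 / 2) + x i ≤ y i ∧
      y i ≤ lam * (2 : ℝ)⁻¹ ^ k * ((w i : ℝ) + 1 / 2) + x i := by
  intro y hy i
  exact ⟨(hy i).1, le_of_lt (hy i).2⟩

end Cube

section Finiteness
variable {d : ℕ}

lemma finite_int_box (a b : ℝ) : {m : ℤ | a ≤ (m:ℝ) ∧ (m:ℝ) ≤ b}.Finite := by
  apply Set.Finite.subset (Set.finite_Icc ⌈a⌉ ⌊b⌋)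
  intro m hm
  simp only [Set.mem_Icc]
  exact ⟨Int.ceil_le.mpr hm.1, Int.le_floor.mpr hm.2⟩

lemma finite_center_mem {n : ℕ} (hn : 1 ≤ n) {S : Set (Rd d)} (a b : Fin d → ℝ)
    (hS : ∀ y ∈ S, ∀ i, a i ≤ y i ∧ y i ≤ b i) :
    {e : Edge d | center n e ∈ S}.Finite := by
  have hnpos : (0:ℝ) < n := by exact_mod_cast hn
  have hsub : {e : Edge d | center n e ∈ S} ⊆
      {z : Fin d → ℤ | ∀ j, (n:ℝ) * a j - 1 ≤ (z j : ℝ) ∧ (z j : ℝ) ≤ (n:ℝ) * b j} ×ˢ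
      (Set.univ : Set (Fin d)) := by
    rintro ⟨z, i⟩ he
    refine ⟨fun j => ?_, trivial⟩
    have h1 := (hS _ he j).1
    have h2 := (hS _ he j).2
    have hc : center n (z, i) j = ((z j : ℝ) + if j = i then 1/2 else 0) / n := rfl
    rw [hc] at h1 h2
    have hite0 : (0:ℝ) ≤ (if j = i then 1/2 else 0 : ℝ) := by split <;> norm_num
    have hite1 : (if j = i then 1/2 else 0 : ℝ) ≤ 1 := by split <;> norm_num
    rw [le_div_iff₀ hnpos] at h1
    rw [div_le_iff₀ hnpos] at h2
    have hcm1 := mul_comm (a j) ((n:ℝ))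
    have hcm2 := mul_comm (b j) ((n:ℝ))
    constructor
    · show (n:ℝ) * a j - 1 ≤ (z j : ℝ)
      linarith
    · show ((z j : ℝ)) ≤ (n:ℝ) * b j
      linarith
  refine Set.Finite.subset ?_ hsub
  refine Set.Finite.prod ?_ (Set.finite_univ)
  refine Set.Finite.subset (Set.Finite.pi (fun j => finite_int_box ((n:ℝ) * a j - 1) ((n:ℝ) * b j))) ?_
  intro z hz j _
  exact hz j

lemma finite_center_dyadicCube {n : ℕ} (hn : 1 ≤ n) (k : ℕ) (lam : ℝ) (w : Fin d → ℤ)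
    (x : Rd d) : {e : Edge d | center n e ∈ dyadicCube k lam w x}.Finite := by
  apply finite_center_mem hn
    (fun i => lam * (2 : ℝ)⁻¹ ^ k * ((w i : ℝ) - 1 / 2) + x i)
    (fun i => lam * (2 : ℝ)⁻¹ ^ k * ((w i : ℝ) + 1 / 2) + x i)
  intro y hy i
  exact ⟨(hy i).1, le_of_lt (hy i).2⟩

lemma streamMeas_eq_sum {n : ℕ} (F : Streamm d) {Q : Set (Rd d)}
    (hQ : {e : Edge d | center n e ∈ Q}.Finite) :
    streamMeas n F Q = ∑ e ∈ hQ.toFinset, ((n : ℝ) ^ d)⁻¹ • streamVec F e := by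
  unfold streamMeas
  rw [tsum_eq_sum (s := hQ.toFinset)]
  · apply Finset.sum_congr rfl
    intro e he
    rw [Set.indicator_of_mem]
    exact hQ.mem_toFinset.mp he
  · intro e he
    rw [Set.indicator_of_notMem]
    intro hc
    exact he (hQ.mem_toFinset.mpr hc)

end Finiteness

section Transport
variable {d : ℕ}

/-- image of a dyadic cube under a positive homothety -/
lemma homoth_dyadicCube {b : Rd d} {δ : ℝ} (hδ : 0 < δ) (k m : ℕ) {lam lam'' : ℝ}
    (hrel : δ * lam = lam'' * (2:ℝ)⁻¹ ^ m) (w : Fin d → ℤ) (x x' : Rd d)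
    (hx' : ∀ i, x' i = δ * x i + b i) :
    homoth b δ '' dyadicCube k lam w x = dyadicCube (k + m) lam'' w x' := by
  have key : ∀ i : Fin d, ∀ c : ℝ, lam'' * (2:ℝ)⁻¹ ^ (k + m) * c + x' i
      = δ * (lam * (2:ℝ)⁻¹ ^ k * c + x i) + b i := by
    intro i c
    rw [hx' i, pow_add]
    linear_combination (-c * (2:ℝ)⁻¹ ^ k) * hrel
  ext u
  constructor
  · rintro ⟨y, hy, rfl⟩
    intro i
    have h1 := (hy i).1
    have h2 := (hy i).2
    rw [homoth_apply, key i ((w i : ℝ) - 1/2), key i ((w i : ℝ) + 1/2)]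
    constructor
    · have := mul_le_mul_of_nonneg_left h1 hδ.le
      linarith
    · have := mul_lt_mul_of_pos_left h2 hδ
      linarith
  · intro hu
    refine ⟨fun i => δ⁻¹ * (u i - b i), fun i => ?_, ?_⟩
    · have h1 := (hu i).1
      have h2 := (hu i).2
      rw [key i ((w i : ℝ) - 1/2)] at h1
      rw [key i ((w i : ℝ) + 1/2)] at h2
      have hA : δ * (lam * (2:ℝ)⁻¹ ^ k * ((w i:ℝ) - 1/2) + x i) ≤ u i - b i := by linarith
      have hB : u i - b i < δ * (lam * (2:ℝ)⁻¹ ^ k * ((w i:ℝ) + 1/2) + x i) := by linarith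
      constructor
      · calc lam * (2:ℝ)⁻¹ ^ k * ((w i:ℝ) - 1/2) + x i
            = δ⁻¹ * (δ * (lam * (2:ℝ)⁻¹ ^ k * ((w i:ℝ) - 1/2) + x i)) := by
              field_simp
          _ ≤ δ⁻¹ * (u i - b i) := mul_le_mul_of_nonneg_left hA (inv_nonneg.mpr hδ.le)
      · calc δ⁻¹ * (u i - b i)
            < δ⁻¹ * (δ * (lam * (2:ℝ)⁻¹ ^ k * ((w i:ℝ) + 1/2) + x i)) :=
              mul_lt_mul_of_pos_left hB (inv_pos.mpr hδ)
          _ = lam * (2:ℝ)⁻¹ ^ k * ((w i:ℝ) + 1/2) + x i := by field_simp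
    · funext i
      rw [homoth_apply]
      field_simp
      ring

/-- reindexing a dyadic cube to reduce the offset modulo `lam • ℤ^d` -/
lemma dyadicCube_reindex (K : ℕ) (lam : ℝ) (w v : Fin d → ℤ) (x x' : Rd d)
    (hx' : ∀ i, x' i = x i - lam * (v i : ℝ)) :
    dyadicCube K lam w x = dyadicCube K lam (w + (2^K : ℤ) • v) x' := by
  have h2K : ((2:ℝ))⁻¹ ^ K * (2:ℝ) ^ K = 1 := by
    rw [← mul_pow]; norm_num
  have key : ∀ i : Fin d, ∀ c : ℝ,
      lam * (2:ℝ)⁻¹ ^ K * (((w + (2^K : ℤ) • v) i : ℝ) + c) + x' i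
      = lam * (2:ℝ)⁻¹ ^ K * ((w i : ℝ) + c) + x i := by
    intro i c
    have hcast : (((w + (2^K : ℤ) • v) i : ℤ) : ℝ) = (w i : ℝ) + (2:ℝ)^K * (v i : ℝ) := by
      push_cast [Pi.add_apply, Pi.smul_apply, smul_eq_mul]
      ring
    rw [hcast, hx' i]
    linear_combination (lam * (v i : ℝ)) * h2K
  ext y
  apply forall_congr'
  intro i
  have k1 := key i (-(1/2))
  have k2 := key i (1/2)
  rw [show (((w + (2^K : ℤ) • v) i : ℤ) : ℝ) + -(1/2)
      = (((w + (2^K : ℤ) • v) i : ℤ) : ℝ) - 1/2 by ring] at k1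
  rw [show ((w i : ℤ) : ℝ) + -(1/2) = ((w i : ℤ) : ℝ) - 1/2 by ring] at k1
  rw [k1.symm, k2.symm]

/-- choice of the scale `m` with `2^m δ lam ∈ [1,2]` -/
lemma exists_scale {δ lam : ℝ} (hδ0 : 0 < δ) (hδ1 : δ ≤ 1) (hlam : 1 ≤ lam) (hlam2 : lam ≤ 2) :
    ∃ m : ℕ, (1 ≤ 2^m * (δ * lam) ∧ 2^m * (δ * lam) ≤ 2) := by
  have hpos : 0 < δ * lam := by nlinarith
  have hex : ∃ m : ℕ, 1 ≤ 2^m * (δ * lam) := by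
    obtain ⟨m, hm⟩ := pow_unbounded_of_one_lt ((δ * lam)⁻¹) (by norm_num : (1:ℝ) < 2)
    refine ⟨m, ?_⟩
    have := mul_lt_mul_of_pos_right hm hpos
    rw [inv_mul_cancel₀ hpos.ne'] at this
    linarith
  classical
  refine ⟨Nat.find hex, Nat.find_spec hex, ?_⟩
  rcases Nat.eq_zero_or_pos (Nat.find hex) with h0 | hposm
  · rw [h0]; norm_num; nlinarith
  · have hlt := Nat.find_min hex (Nat.sub_lt hposm one_pos)
    push_neg at hlt
    have hsplit : (2:ℝ) ^ (Nat.find hex) = 2 * 2 ^ (Nat.find hex - 1) := by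
      conv_lhs => rw [show Nat.find hex = (Nat.find hex - 1) + 1 by omega]
      rw [pow_succ]; ring
    rw [hsplit]
    nlinarith

/-- reduction of the offset into `[-lam/2, lam/2) ⊆ [-1,1)` -/
lemma exists_offset {lam : ℝ} (h1 : 1 ≤ lam) (h2 : lam ≤ 2) (x : Rd d) :
    ∃ v : Fin d → ℤ, ∀ i, -1 ≤ x i - lam * v i ∧ x i - lam * v i < 1 := by
  refine ⟨fun i => ⌊x i / lam + 1/2⌋, fun i => ?_⟩
  have hlam0 : 0 < lam := by linarith
  have hfl := Int.floor_le (x i / lam + 1/2)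
  have hfl2 := Int.lt_floor_add_one (x i / lam + 1/2)
  have e1 : lam * (⌊x i / lam + 1/2⌋ : ℝ) ≤ lam * (x i / lam + 1/2) :=
    (mul_le_mul_iff_right₀ hlam0).mpr hfl
  have e2 : lam * (x i / lam + 1/2) < lam * ((⌊x i / lam + 1/2⌋ : ℝ) + 1) :=
    (mul_lt_mul_iff_right₀ hlam0).mpr hfl2
  have hx : lam * (x i / lam + 1/2) = x i + lam/2 := by field_simp
  rw [hx] at e1 e2
  constructor
  · nlinarith
  · nlinarith

end Transport

section MeasTransport
variable {d : ℕ}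

lemma homoth_image_eq_preimage {b : Rd d} {δ : ℝ} (hδ : δ ≠ 0) (S : Set (Rd d)) :
    homoth b δ '' S = (fun u => δ⁻¹ • (u - b)) ⁻¹' S := by
  ext u
  constructor
  · rintro ⟨y, hy, rfl⟩
    have : δ⁻¹ • (homoth b δ y - b) = y := by
      funext i
      simp only [homoth, Pi.smul_apply, Pi.sub_apply, Pi.add_apply, smul_eq_mul]
      field_simp
      ring
    simpa [Set.mem_preimage, this] using hy
  · intro hu
    exact ⟨δ⁻¹ • (u - b), hu, homoth_surj hδ u⟩

lemma measurableSet_homoth_image {b : Rd d} {δ : ℝ} (hδ : δ ≠ 0) {S : Set (Rd d)}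
    (hS : MeasurableSet S) : MeasurableSet (homoth b δ '' S) := by
  rw [homoth_image_eq_preimage hδ]
  exact hS.preimage (by fun_prop)

lemma quasiMeasurePreserving_homoth (b : Rd d) {δ : ℝ} (hδ : δ ≠ 0) :
    Measure.QuasiMeasurePreserving (homoth b δ)
      (volume : Measure (Rd d)) (volume : Measure (Rd d)) := by
  have h1 : Measure.QuasiMeasurePreserving (fun y : Rd d => δ • y) volume volume :=
    Measure.quasiMeasurePreserving_smul volume hδ
  have h2 : Measure.QuasiMeasurePreserving (fun y : Rd d => y + b) volume volume :=
    (measurePreserving_add_right volume b).quasiMeasurePreserving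
  exact h2.comp h1

lemma ae_comp_homoth {b : Rd d} {δ : ℝ} (hδ : δ ≠ 0) {p : Rd d → Prop}
    (h : ∀ᵐ u : Rd d, p u) : ∀ᵐ y : Rd d, p (homoth b δ y) :=
  (quasiMeasurePreserving_homoth b hδ).ae h

@[simp] lemma edgeShift_symm_apply (w : Fin d → ℤ) (e : Edge d) :
    (edgeShift w).symm e = (e.1 - w, e.2) := rfl

/-- transport of the stream measure under the homothety -/
lemma streamMeas_homoth {n n₀ : ℕ} (hn₀ : 1 ≤ n₀) (hn : n₀ ≤ n) (w : Fin d → ℤ)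
    (F : Streamm d) (k : ℕ) (lam : ℝ) (W : Fin d → ℤ) (x : Rd d) :
    streamMeas n₀ (fun e => F (edgeShift w e)) (dyadicCube k lam W x)
      = ((n:ℝ)^d * (((n₀:ℝ)^d)⁻¹)) •
        streamMeas n F (homoth (pt n w) ((n₀:ℝ)/n) '' dyadicCube k lam W x) := by
  have hn₀' : (0:ℝ) < (n₀:ℝ) := by exact_mod_cast hn₀
  have hn' : (0:ℝ) < (n:ℝ) := by exact_mod_cast le_trans hn₀ hn
  have hδ : ((n₀:ℝ)/n) ≠ 0 := by positivity
  have hD₀ : {e : Edge d | center n₀ e ∈ dyadicCube k lam W x}.Finite :=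
    finite_center_dyadicCube hn₀ _ _ _ _
  have hset : {e : Edge d | center n e ∈ homoth (pt n w) ((n₀:ℝ)/n) '' dyadicCube k lam W x}
      = (edgeShift w) '' {e | center n₀ e ∈ dyadicCube k lam W x} := by
    ext e'
    constructor
    · intro he'
      refine ⟨(edgeShift w).symm e', ?_, (edgeShift w).apply_symm_apply e'⟩
      have hce : center n e' = homoth (pt n w) ((n₀:ℝ)/n) (center n₀ ((edgeShift w).symm e')) := by
        rw [center_homoth hn₀ hn, (edgeShift w).apply_symm_apply]
      rw [Set.mem_setOf_eq, hce] at he'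
      exact (homoth_mem_image_iff hδ).mp he'
    · rintro ⟨e, he, rfl⟩
      show center n (edgeShift w e) ∈ homoth (pt n w) ((n₀:ℝ)/n) '' dyadicCube k lam W x
      rw [← center_homoth hn₀ hn]
      exact Set.mem_image_of_mem _ he
  have hD : {e : Edge d | center n e ∈ homoth (pt n w) ((n₀:ℝ)/n) '' dyadicCube k lam W x}.Finite := by
    rw [hset]; exact hD₀.image _
  rw [streamMeas_eq_sum _ hD₀, streamMeas_eq_sum _ hD, Finset.smul_sum]
  have hfs : hD.toFinset = hD₀.toFinset.map (edgeShift w).toEmbedding := by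
    ext e'
    simp only [Set.Finite.mem_toFinset, Finset.mem_map_equiv, hset]
    constructor
    · rintro ⟨e, he, rfl⟩
      simpa [edgeShift_symm_apply, add_sub_cancel_right] using he
    · intro he
      exact ⟨(edgeShift w).symm e', he, by simp [edgeShift_symm_apply, sub_add_cancel]⟩
  rw [hfs, Finset.sum_map]
  apply Finset.sum_congr rfl
  intro e _
  show ((n₀:ℝ)^d)⁻¹ • streamVec (fun e => F (edgeShift w e)) e
    = ((n:ℝ)^d * (((n₀:ℝ)^d)⁻¹)) • (((n:ℝ)^d)⁻¹ • streamVec F (edgeShift w e))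
  rw [smul_smul]
  congr 1
  field_simp

/-- transport of the density measure under the homothety -/
lemma densMeas_homoth {n n₀ : ℕ} (hn₀ : 1 ≤ n₀) (hn : n₀ ≤ n) (w : Fin d → ℤ)
    (σ : Rd d → Rd d) {Q C : Set (Rd d)} (hQ : MeasurableSet Q) (hC : MeasurableSet C) :
    densMeas (Set.indicator (homoth (pt n w) ((n₀:ℝ)/n) '' C) σ)
        (homoth (pt n w) ((n₀:ℝ)/n) '' Q)
      = (((n₀:ℝ)/n)^d) •
        densMeas (Set.indicator C (fun y => σ (homoth (pt n w) ((n₀:ℝ)/n) y))) Q := by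
  have hn₀' : (0:ℝ) < (n₀:ℝ) := by exact_mod_cast hn₀
  have hn' : (0:ℝ) < (n:ℝ) := by exact_mod_cast le_trans hn₀ hn
  set δ : ℝ := (n₀:ℝ)/n with hδdef
  have hδ0 : 0 < δ := by positivity
  have hδ : δ ≠ 0 := hδ0.ne'
  set b : Rd d := pt n w
  set g : Rd d → Rd d :=
    Set.indicator (homoth b δ '' Q) (Set.indicator (homoth b δ '' C) σ) with hgdef
  have h1 : densMeas (Set.indicator (homoth b δ '' C) σ) (homoth b δ '' Q)
      = ∫ y, g y := by
    rw [hgdef, integral_indicator (measurableSet_homoth_image hδ hQ)]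
    rfl
  have hcomp : ∀ y : Rd d, g (homoth b δ y)
      = Set.indicator Q (Set.indicator C (fun u => σ (homoth b δ u))) y := by
    intro y
    by_cases hyQ : y ∈ Q
    · rw [hgdef]
      rw [Set.indicator_of_mem (Set.mem_image_of_mem _ hyQ), Set.indicator_of_mem hyQ]
      by_cases hyC : y ∈ C
      · rw [Set.indicator_of_mem (Set.mem_image_of_mem _ hyC), Set.indicator_of_mem hyC]
      · rw [Set.indicator_of_notMem (fun hc => hyC ((homoth_mem_image_iff hδ).mp hc)),
          Set.indicator_of_notMem hyC]
    · rw [hgdef, Set.indicator_of_notMem (fun hc => hyQ ((homoth_mem_image_iff hδ).mp hc)),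
        Set.indicator_of_notMem hyQ]
  have h2 : ∫ y, g (homoth b δ y) = |((δ ^ d)⁻¹)| • ∫ y, g y := by
    have hrk : Module.finrank ℝ (Rd d) = d := Module.finrank_fin_fun ℝ
    have := MeasureTheory.Measure.integral_comp_smul (volume : Measure (Rd d))
      (fun z => g (z + b)) δ
    rw [hrk] at this
    calc ∫ y, g (homoth b δ y) = ∫ y, g (δ • y + b) := rfl
      _ = |((δ ^ d)⁻¹)| • ∫ z, g (z + b) := this
      _ = |((δ ^ d)⁻¹)| • ∫ y, g y := by rw [integral_add_right_eq_self]
  have h3 : ∫ y, g (homoth b δ y)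
      = densMeas (Set.indicator C (fun u => σ (homoth b δ u))) Q := by
    simp_rw [hcomp]
    rw [integral_indicator hQ]
    rfl
  rw [h1, ← h3, h2]
  rw [smul_smul]
  have habs : |((δ ^ d)⁻¹)| = (δ ^ d)⁻¹ := abs_of_pos (by positivity)
  rw [habs]
  have : δ ^ d * (δ ^ d)⁻¹ = 1 := mul_inv_cancel₀ (by positivity)
  rw [this, one_smul]

end MeasTransport

section DdistTransport
variable {d : ℕ}

/-- The main deterministic rescaling estimate for `𝔡`. -/
lemma ddist_homoth {n n₀ : ℕ} (hn₀ : 1 ≤ n₀) (hn : n₀ ≤ n) (w : Fin d → ℤ)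
    (F : Streamm d) (σ : Rd d → Rd d) {ε : ℝ} (hε : 0 ≤ ε)
    (h : ddist (streamMeas n F)
        (densMeas (Set.indicator (homoth (pt n w) ((n₀:ℝ)/n) '' unitCube d) σ))
        ≤ ENNReal.ofReal ((1/2) * ((n₀:ℝ)/n)^(d+1) * ε)) :
    ddist (streamMeas n₀ (fun e => F (edgeShift w e)))
        (densMeas (Set.indicator (unitCube d) (fun y => σ (homoth (pt n w) ((n₀:ℝ)/n) y))))
        ≤ ENNReal.ofReal ε := by
  have hn₀' : (0:ℝ) < (n₀:ℝ) := by exact_mod_cast hn₀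
  have hn' : (0:ℝ) < (n:ℝ) := by exact_mod_cast le_trans hn₀ hn
  set δ : ℝ := (n₀:ℝ)/n with hδdef
  have hδ0 : 0 < δ := by positivity
  have hδ1 : δ ≤ 1 := by
    rw [hδdef, div_le_one hn']
    exact_mod_cast hn
  set b : Rd d := pt n w with hbdef
  set νn := streamMeas n F with hνn
  set μtn := densMeas (Set.indicator (homoth b δ '' unitCube d) σ) with hμtn
  set ν₀ := streamMeas n₀ (fun e => F (edgeShift w e)) with hν₀
  set μt₀ := densMeas (Set.indicator (unitCube d) (fun y => σ (homoth b δ y))) with hμt₀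
  rw [ddist]
  refine iSup_le fun x => iSup_le fun hx => iSup_le fun lam => iSup_le fun hlam => ?_
  -- choose the scale m and the offset v
  obtain ⟨m, h1m, h2m⟩ := exists_scale hδ0 hδ1 hlam.1 hlam.2
  set lam'' : ℝ := 2^m * (δ * lam) with hlam''def
  have h2pow : (2:ℝ)^m * (2:ℝ)⁻¹^m = 1 := by rw [← mul_pow]; norm_num
  have hrel : δ * lam = lam'' * (2:ℝ)⁻¹ ^ m := by
    rw [hlam''def]
    calc δ * lam = ((2:ℝ)^m * (2:ℝ)⁻¹^m) * (δ * lam) := by rw [h2pow]; ring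
      _ = 2^m * (δ * lam) * (2:ℝ)⁻¹^m := by ring
  set x' : Rd d := fun i => δ * x i + b i with hx'def
  obtain ⟨v, hv⟩ := exists_offset h1m h2m x'
  set x'' : Rd d := fun i => x' i - lam'' * v i with hx''def
  have hx'' : ∀ i, -1 ≤ x'' i ∧ x'' i < 1 := hv
  -- the transported cubes
  have hcube : ∀ (k : ℕ) (W : Fin d → ℤ),
      homoth b δ '' dyadicCube k lam W x
        = dyadicCube (k+m) lam'' (W + (2^(k+m) : ℤ) • v) x'' := by
    intro k W
    rw [homoth_dyadicCube hδ0 k m hrel W x x' (fun i => rfl)]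
    exact dyadicCube_reindex (k+m) lam'' W v x' x'' (fun i => rfl)
  -- the difference of measures on a transported cube
  have hdpow : (0:ℝ) < δ ^ d := by positivity
  have hconv : ((n:ℝ)^d * (((n₀:ℝ)^d)⁻¹)) = (δ^d)⁻¹ := by
    rw [hδdef, div_pow, inv_div, div_eq_mul_inv]
  have hdiff : ∀ (k : ℕ) (W : Fin d → ℤ),
      μt₀ (dyadicCube k lam W x) - ν₀ (dyadicCube k lam W x)
        = (δ^d)⁻¹ • (μtn (homoth b δ '' dyadicCube k lam W x)
            - νn (homoth b δ '' dyadicCube k lam W x)) := by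
    intro k W
    have e1 : ν₀ (dyadicCube k lam W x) = (δ^d)⁻¹ • νn (homoth b δ '' dyadicCube k lam W x) := by
      rw [hν₀, hνn, streamMeas_homoth hn₀ hn w F k lam W x, hconv]
    have e2 : μtn (homoth b δ '' dyadicCube k lam W x) = (δ^d) • μt₀ (dyadicCube k lam W x) := by
      rw [hμtn, hμt₀]
      exact densMeas_homoth hn₀ hn w σ (measurableSet_dyadicCube k lam W x) measurableSet_unitCube
    rw [e1, e2, smul_sub, smul_smul, inv_mul_cancel₀ hdpow.ne', one_smul]
  -- termwise bound
  set g : ℕ → (Fin d → ℤ) → ℝ≥0∞ := fun K W' =>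
    ENNReal.ofReal (nrm2 (μtn (dyadicCube K lam'' W' x'') - νn (dyadicCube K lam'' W' x''))) with hgdef
  have hterm : ∀ (k : ℕ) (W : Fin d → ℤ),
      ENNReal.ofReal (nrm2 (μt₀ (dyadicCube k lam W x) - ν₀ (dyadicCube k lam W x)))
        = ENNReal.ofReal ((δ^d)⁻¹) * g (k+m) (W + (2^(k+m) : ℤ) • v) := by
    intro k W
    rw [hdiff k W, hcube k W, nrm2_smul, abs_of_pos (inv_pos.mpr hdpow),
      ENNReal.ofReal_mul (le_of_lt (inv_pos.mpr hdpow))]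
  -- sum the bound
  have hsum : ∀ k : ℕ,
      (∑' W : Fin d → ℤ, ENNReal.ofReal
        (nrm2 (μt₀ (dyadicCube k lam W x) - ν₀ (dyadicCube k lam W x))))
      = ENNReal.ofReal ((δ^d)⁻¹) * ∑' W' : Fin d → ℤ, g (k+m) W' := by
    intro k
    calc (∑' W : Fin d → ℤ, ENNReal.ofReal
        (nrm2 (μt₀ (dyadicCube k lam W x) - ν₀ (dyadicCube k lam W x))))
        = ∑' W : Fin d → ℤ, ENNReal.ofReal ((δ^d)⁻¹) * g (k+m) (W + (2^(k+m) : ℤ) • v) := by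
          exact tsum_congr (fun W => hterm k W)
      _ = ENNReal.ofReal ((δ^d)⁻¹) * ∑' W : Fin d → ℤ, g (k+m) (W + (2^(k+m) : ℤ) • v) :=
          ENNReal.tsum_mul_left
      _ = ENNReal.ofReal ((δ^d)⁻¹) * ∑' W' : Fin d → ℤ, g (k+m) W' := by
          congr 1
          exact (Equiv.addRight ((2^(k+m) : ℤ) • v)).tsum_eq (g (k+m))
  have h2pow' : ((2:ℝ≥0∞)^m) * ((2:ℝ≥0∞)⁻¹^m) = 1 := by
    rw [← mul_pow, ENNReal.mul_inv_cancel (by norm_num) (by norm_num), one_pow]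
  calc (∑' k : ℕ, (2 : ℝ≥0∞)⁻¹ ^ k *
      ∑' W : Fin d → ℤ, ENNReal.ofReal
        (nrm2 (μt₀ (dyadicCube k lam W x) - ν₀ (dyadicCube k lam W x))))
      = ∑' k : ℕ, (2 : ℝ≥0∞)⁻¹ ^ k *
          (ENNReal.ofReal ((δ^d)⁻¹) * ∑' W' : Fin d → ℤ, g (k+m) W') := by
        exact tsum_congr (fun k => by rw [hsum k])
    _ = ENNReal.ofReal ((δ^d)⁻¹) * (2:ℝ≥0∞)^m *
          ∑' k : ℕ, (2 : ℝ≥0∞)⁻¹ ^ (k+m) * ∑' W' : Fin d → ℤ, g (k+m) W' := by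
        rw [← ENNReal.tsum_mul_left]
        refine tsum_congr (fun k => ?_)
        rw [pow_add]
        calc (2 : ℝ≥0∞)⁻¹ ^ k * (ENNReal.ofReal ((δ^d)⁻¹) * ∑' W', g (k+m) W')
            = (((2:ℝ≥0∞)^m) * ((2:ℝ≥0∞)⁻¹^m)) *
              ((2 : ℝ≥0∞)⁻¹ ^ k * (ENNReal.ofReal ((δ^d)⁻¹) * ∑' W', g (k+m) W')) := by
              rw [h2pow', one_mul]
          _ = ENNReal.ofReal ((δ^d)⁻¹) * (2:ℝ≥0∞)^m *
              ((2:ℝ≥0∞)⁻¹^k * (2:ℝ≥0∞)⁻¹^m * ∑' W', g (k+m) W') := by ring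
    _ ≤ ENNReal.ofReal ((δ^d)⁻¹) * (2:ℝ≥0∞)^m *
          ∑' K : ℕ, (2 : ℝ≥0∞)⁻¹ ^ K * ∑' W' : Fin d → ℤ, g K W' := by
        refine mul_le_mul_right ?_ _
        exact ENNReal.tsum_comp_le_tsum_of_injective
          (f := fun k : ℕ => k + m) (add_left_injective m)
          (fun K => (2 : ℝ≥0∞)⁻¹ ^ K * ∑' W' : Fin d → ℤ, g K W')
    _ ≤ ENNReal.ofReal ((δ^d)⁻¹) * (2:ℝ≥0∞)^m *
          ENNReal.ofReal ((1/2) * δ^(d+1) * ε) := by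
        refine mul_le_mul_right ?_ _
        refine le_trans ?_ h
        rw [ddist]
        refine le_iSup_of_le x'' (le_iSup_of_le hx'' (le_iSup_of_le lam''
          (le_iSup_of_le ⟨h1m, h2m⟩ le_rfl)))
    _ ≤ ENNReal.ofReal ε := by
        have hcast : ((2:ℝ≥0∞)^m) = ENNReal.ofReal ((2:ℝ)^m) := by
          rw [ENNReal.ofReal_pow (by norm_num)]
          norm_num
        rw [hcast, ← ENNReal.ofReal_mul (le_of_lt (inv_pos.mpr hdpow)),
          ← ENNReal.ofReal_mul (by positivity)]
        refine ENNReal.ofReal_le_ofReal ?_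
        have h2mδ : (2:ℝ)^m * δ ≤ 2 := by
          have hlam1 : 1 ≤ lam := hlam.1
          nlinarith [h2m, hδ0, pow_pos (show (0:ℝ) < 2 by norm_num) m]
        have hpowsucc : δ^(d+1) = δ^d * δ := pow_succ δ d
        calc (δ^d)⁻¹ * (2:ℝ)^m * ((1/2) * δ^(d+1) * ε)
            = ((δ^d)⁻¹ * δ^d) * ((2:ℝ)^m * δ) * ((1/2) * ε) := by rw [hpowsucc]; ring
          _ = ((2:ℝ)^m * δ) * ((1/2) * ε) := by rw [inv_mul_cancel₀ hdpow.ne', one_mul]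
          _ ≤ 2 * ((1/2) * ε) := by nlinarith
          _ = ε := by ring

end DdistTransport

section Bound
variable {d : ℕ}

/-- componentwise bound for the density measure of dyadic cubes -/
lemma densMeas_cube_bound (σ' : Rd d → Rd d) {C : ℝ}
    (hC : ∀ᵐ y : Rd d, nrm2 (σ' y) ≤ C) (S : Set (Rd d))
    (k : ℕ) {lam : ℝ} (hlam0 : 0 ≤ lam) (hlam : lam ≤ 2) (W : Fin d → ℤ) (x : Rd d) (i : Fin d) :
    |densMeas (Set.indicator S σ') (dyadicCube k lam W x) i| ≤ max C 0 * 2^d := by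
  set Q := dyadicCube k lam W x with hQdef
  set f := Set.indicator S σ' with hfdef
  have hvol : volume Q = ENNReal.ofReal ((lam * (2:ℝ)⁻¹ ^ k) ^ d) :=
    volume_dyadicCube k hlam0 W x
  have hvolfin : volume Q < ∞ := by rw [hvol]; exact ENNReal.ofReal_lt_top
  have haebd : ∀ᵐ y : Rd d, y ∈ Q → ‖f y‖ ≤ max C 0 := by
    filter_upwards [hC] with y hy _
    rw [hfdef]
    by_cases hyS : y ∈ S
    · rw [Set.indicator_of_mem hyS]
      rw [pi_norm_le_iff_of_nonneg (le_max_right C 0)]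
      intro j
      rw [Real.norm_eq_abs]
      exact le_trans (abs_le_nrm2 (σ' y) j) (le_max_of_le_left hy)
    · rw [Set.indicator_of_notMem hyS]
      simpa using le_max_right C 0
  have hkey : ‖∫ y in Q, f y‖ ≤ max C 0 * (volume Q).toReal :=
    norm_setIntegral_le_of_norm_le_const_ae' hvolfin haebd
  have h1 : |densMeas f Q i| ≤ ‖∫ y in Q, f y‖ := by
    rw [← Real.norm_eq_abs]
    exact norm_le_pi_norm (∫ y in Q, f y) i
  refine le_trans h1 (le_trans hkey ?_)
  have htoReal : (volume Q).toReal = (lam * (2:ℝ)⁻¹ ^ k) ^ d := by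
    rw [hvol, ENNReal.toReal_ofReal (by positivity)]
  rw [htoReal]
  have hside : lam * (2:ℝ)⁻¹ ^ k ≤ 2 := by
    have h2k : (2:ℝ)⁻¹ ^ k ≤ 1 := by
      apply pow_le_one₀ <;> norm_num
    nlinarith
  have : (lam * (2:ℝ)⁻¹ ^ k) ^ d ≤ 2 ^ d := by
    exact pow_le_pow_left₀ (by positivity) hside d
  nlinarith [le_max_right C 0, pow_pos (show (0:ℝ) < 2 by norm_num) d,
    pow_nonneg (show (0:ℝ) ≤ lam * (2:ℝ)⁻¹ ^ k by positivity) d]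

/-- a uniform bound on stream intensities from a `𝔡`-closeness condition -/
lemma stream_ddist_bound {n₀ : ℕ} (hn₀ : 1 ≤ n₀) (F : Streamm d)
    (μt : Set (Rd d) → Rd d) {C' : ℝ} (hC' : 0 ≤ C')
    (hμt : ∀ (k : ℕ) (W : Fin d → ℤ) (x : Rd d), (∀ i, -1 ≤ x i ∧ x i < 1) →
      ∀ i, |μt (dyadicCube k 1 W x) i| ≤ C')
    {ε : ℝ} (hε : 0 ≤ ε) (h : ddist (streamMeas n₀ F) μt ≤ ENNReal.ofReal ε) :
    ∀ e : Edge d, |F e| ≤ (n₀:ℝ)^d * (2^(n₀+1) * ε + C') := by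
  rintro ⟨z, i₀⟩
  have hn₀' : (0:ℝ) < (n₀:ℝ) := by exact_mod_cast hn₀
  set k := n₀ + 1 with hkdef
  set c := center n₀ (z, i₀) with hcdef
  have h2k : (0:ℝ) < (2:ℝ)⁻¹ ^ k := by positivity
  have h2k1 : (2:ℝ)⁻¹ ^ k ≤ 1 := by apply pow_le_one₀ <;> norm_num
  set W : Fin d → ℤ := fun j => ⌊(2:ℝ)^k * c j⌋ with hWdef
  set x : Rd d := fun j => c j - (2:ℝ)⁻¹ ^ k * (W j : ℝ) with hxdef
  have hpowinv : (2:ℝ)⁻¹ ^ k * (2:ℝ) ^ k = 1 := by rw [← mul_pow]; norm_num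
  have hxbd : ∀ j, 0 ≤ x j ∧ x j < (2:ℝ)⁻¹ ^ k := by
    intro j
    have hfl := Int.floor_le ((2:ℝ)^k * c j)
    have hfl2 := Int.lt_floor_add_one ((2:ℝ)^k * c j)
    have hcj : (2:ℝ)⁻¹^k * ((2:ℝ)^k * c j) = c j := by
      rw [← mul_assoc, hpowinv, one_mul]
    constructor
    · have := mul_le_mul_of_nonneg_left hfl h2k.le
      rw [hxdef]
      simp only [hWdef]
      linarith [hcj]
    · have := mul_lt_mul_of_pos_left hfl2 h2k
      rw [hxdef]
      simp only [hWdef]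
      nlinarith [hcj]
  have hx : ∀ j, -1 ≤ x j ∧ x j < 1 := by
    intro j
    exact ⟨le_trans (by norm_num) (hxbd j).1, lt_of_lt_of_le (hxbd j).2 h2k1⟩
  set Q := dyadicCube k 1 W x with hQdef
  -- membership bounds of the cube
  have hQbd : ∀ y ∈ Q, ∀ j, c j - (2:ℝ)⁻¹ ^ k * (1/2) ≤ y j ∧ y j < c j + (2:ℝ)⁻¹ ^ k * (1/2) := by
    intro y hy j
    have h1 := (hy j).1
    have h2 := (hy j).2
    have hlo : (1:ℝ) * (2:ℝ)⁻¹ ^ k * ((W j : ℝ) - 1/2) + x j = c j - (2:ℝ)⁻¹ ^ k * (1/2) := by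
      rw [hxdef]; simp only; ring
    have hhi : (1:ℝ) * (2:ℝ)⁻¹ ^ k * ((W j : ℝ) + 1/2) + x j = c j + (2:ℝ)⁻¹ ^ k * (1/2) := by
      rw [hxdef]; simp only; ring
    rw [hlo] at h1; rw [hhi] at h2
    exact ⟨h1, h2⟩
  have hcQ : c ∈ Q := by
    intro j
    have hlo : (1:ℝ) * (2:ℝ)⁻¹ ^ k * ((W j : ℝ) - 1/2) + x j = c j - (2:ℝ)⁻¹ ^ k * (1/2) := by
      rw [hxdef]; simp only; ring
    have hhi : (1:ℝ) * (2:ℝ)⁻¹ ^ k * ((W j : ℝ) + 1/2) + x j = c j + (2:ℝ)⁻¹ ^ k * (1/2) := by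
      rw [hxdef]; simp only; ring
    rw [hlo, hhi]
    constructor <;> nlinarith
  -- only the center of `e` lies in `Q`
  have hsep : ∀ e' : Edge d, center n₀ e' ∈ Q → e' = (z, i₀) := by
    rintro ⟨z', i'⟩ he'
    have hklarge : (2:ℝ)^k ≥ 2 * (n₀:ℝ) := by
      rw [hkdef]
      have : (n₀:ℝ) < 2^n₀ := by exact_mod_cast (Nat.lt_two_pow_self (n := n₀))
      rw [pow_succ]
      nlinarith
    have hdist : ∀ j, |center n₀ (z', i') j - c j| < (2:ℝ)⁻¹ ^ k := by
      intro j
      have h1 := (hQbd _ he' j).1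
      have h2 := (hQbd _ he' j).2
      rw [abs_lt]
      constructor <;> linarith [h2k]
    -- integer coordinates
    have hint : ∀ j, (2 * z' j + (if j = i' then 1 else 0) : ℤ) = 2 * z j + (if j = i₀ then 1 else 0) := by
      intro j
      have hd := hdist j
      have hc1 : center n₀ (z', i') j = ((2 * z' j + (if j = i' then 1 else 0) : ℤ) : ℝ) / (2 * n₀) := by
        show ((z' j : ℝ) + if j = i' then 1/2 else 0) / n₀ = _
        push_cast
        split <;> (field_simp; try ring)
      have hc2 : c j = ((2 * z j + (if j = i₀ then 1 else 0) : ℤ) : ℝ) / (2 * n₀) := by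
        rw [hcdef]
        show ((z j : ℝ) + if j = i₀ then 1/2 else 0) / n₀ = _
        push_cast
        split <;> (field_simp; try ring)
      rw [hc1, hc2, div_sub_div_same, abs_div, abs_of_pos (by positivity : (0:ℝ) < 2 * n₀),
        div_lt_iff₀ (by positivity : (0:ℝ) < 2 * n₀)] at hd
      have hle : (2:ℝ)⁻¹ ^ k * (2 * n₀) ≤ 1 := by
        rw [show ((2:ℝ)⁻¹ ^ k) = ((2:ℝ)^k)⁻¹ by rw [inv_pow]]
        rw [inv_mul_le_iff₀ (by positivity)]
        nlinarith
      have habs : |((2 * z' j + (if j = i' then 1 else 0) : ℤ) : ℝ)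
          - ((2 * z j + (if j = i₀ then 1 else 0) : ℤ) : ℝ)| < 1 := lt_of_lt_of_le hd hle
      have : |(2 * z' j + (if j = i' then 1 else 0) : ℤ) - (2 * z j + (if j = i₀ then 1 else 0))| < 1 := by
        exact_mod_cast (by rwa [← Int.cast_sub, ← Int.cast_abs] at habs :
          ((|(2 * z' j + (if j = i' then 1 else 0) : ℤ) - (2 * z j + (if j = i₀ then 1 else 0))| : ℤ) : ℝ) < 1)
      have hbounds := abs_lt.mp this
      omega
    have hii : i' = i₀ := by
      by_contra hne
      have hthis := hint i'
      rw [if_pos rfl, if_neg hne] at hthis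
      omega
    have hz : z' = z := by
      funext j
      have hthis := hint j
      rw [hii] at hthis
      by_cases hji : j = i₀
      · rw [if_pos hji] at hthis
        omega
      · rw [if_neg hji] at hthis
        omega
    rw [hz, hii]
  -- the stream measure of `Q` has a single atom
  have hsingle : streamMeas n₀ F Q = ((n₀:ℝ)^d)⁻¹ • streamVec F (z, i₀) := by
    rw [streamMeas]
    rw [tsum_eq_single (z, i₀) ?_]
    · rw [Set.indicator_of_mem hcQ]
    · intro e' hne
      rw [Set.indicator_of_notMem]
      intro hmem
      exact hne (hsep e' hmem)
  -- extract the single term from ddist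
  have hterm : (2 : ℝ≥0∞)⁻¹ ^ k *
      ENNReal.ofReal (nrm2 (μt Q - streamMeas n₀ F Q)) ≤ ENNReal.ofReal ε := by
    refine le_trans ?_ h
    rw [ddist]
    refine le_iSup_of_le x (le_iSup_of_le hx (le_iSup_of_le 1
      (le_iSup_of_le ⟨le_refl 1, by norm_num⟩ ?_)))
    refine le_trans ?_ (ENNReal.le_tsum k)
    refine mul_le_mul_right ?_ _
    exact ENNReal.le_tsum W
  have h2kE : ((2:ℝ≥0∞) ^ k) * ((2:ℝ≥0∞)⁻¹^k) = 1 := by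
    rw [← mul_pow, ENNReal.mul_inv_cancel (by norm_num) (by norm_num), one_pow]
  have hterm2 : ENNReal.ofReal (nrm2 (μt Q - streamMeas n₀ F Q))
      ≤ ENNReal.ofReal ((2:ℝ)^k * ε) := by
    have := mul_le_mul_right hterm ((2:ℝ≥0∞) ^ k)
    rw [← mul_assoc, h2kE, one_mul] at this
    refine le_trans this ?_
    rw [ENNReal.ofReal_mul (by positivity)]
    refine mul_le_mul_left ?_ _
    have hcast : ENNReal.ofReal ((2:ℝ)^k) = (2:ℝ≥0∞)^k := by
      rw [ENNReal.ofReal_pow (by norm_num), ENNReal.ofReal_ofNat]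
    exact le_of_eq hcast.symm
  have hnrm : nrm2 (μt Q - streamMeas n₀ F Q) ≤ (2:ℝ)^k * ε := by
    rw [ENNReal.ofReal_le_ofReal_iff (by positivity)] at hterm2
    exact hterm2
  have hcomp : |(μt Q - streamMeas n₀ F Q) i₀| ≤ (2:ℝ)^k * ε :=
    le_trans (abs_le_nrm2 _ i₀) hnrm
  have hstream_i : streamMeas n₀ F Q i₀ = ((n₀:ℝ)^d)⁻¹ * F (z, i₀) := by
    rw [hsingle]
    show ((n₀:ℝ)^d)⁻¹ * (F (z, i₀) • bvec i₀) i₀ = _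
    show ((n₀:ℝ)^d)⁻¹ * (F (z, i₀) * (if i₀ = i₀ then (1:ℝ) else 0)) = _
    rw [if_pos rfl, mul_one]
  have hμtQ := hμt k W x hx i₀
  have hdiff : (μt Q - streamMeas n₀ F Q) i₀ = μt Q i₀ - ((n₀:ℝ)^d)⁻¹ * F (z, i₀) := by
    rw [Pi.sub_apply, hstream_i]
  rw [hdiff] at hcomp
  have hFbd : |((n₀:ℝ)^d)⁻¹ * F (z, i₀)| ≤ (2:ℝ)^k * ε + C' := by
    have := abs_sub_abs_le_abs_sub (((n₀:ℝ)^d)⁻¹ * F (z, i₀)) (μt Q i₀)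
    have h2 : |((n₀:ℝ)^d)⁻¹ * F (z, i₀) - μt Q i₀| = |μt Q i₀ - ((n₀:ℝ)^d)⁻¹ * F (z, i₀)| :=
      abs_sub_comm _ _
    linarith [abs_nonneg (μt Q i₀)]
  have hnd : (0:ℝ) < (n₀:ℝ)^d := by positivity
  calc |F (z, i₀)| = (n₀:ℝ)^d * |((n₀:ℝ)^d)⁻¹ * F (z, i₀)| := by
        rw [abs_mul, abs_of_pos (inv_pos.mpr hnd), ← mul_assoc, mul_inv_cancel₀ hnd.ne', one_mul]
    _ ≤ (n₀:ℝ)^d * ((2:ℝ)^k * ε + C') := by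
        exact mul_le_mul_of_nonneg_left hFbd hnd.le
    _ = (n₀:ℝ)^d * (2^(n₀+1) * ε + C') := by rw [hkdef]

end Bound

section Closedness
variable {d : ℕ}

/-- admissible streams with a global bound `j`, node law in the unit cube,
and `𝔡`-closeness `ε` to the target `μt`, at scale `n₀` -/
def Kset (d : ℕ) (n₀ : ℕ) (μt : Set (Rd d) → Rd d) (ε : ℝ) (j : ℕ) : Set (Streamm d) :=
  {F | (∀ e : Edge d, F e ∈ Set.Icc (-(j:ℝ)) (j:ℝ)) ∧
       (∀ z : Fin d → ℤ, pt n₀ z ∈ unitCube d →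
          (∀ i : Fin d, pt n₀ (unshift z i) ∈ unitCube d) → nodeLaw F z) ∧
       ddist (streamMeas n₀ F) μt ≤ ENNReal.ofReal ε}

lemma continuous_streamMeas_cube {n₀ : ℕ} (hn₀ : 1 ≤ n₀) (k : ℕ) (lam : ℝ)
    (W : Fin d → ℤ) (x : Rd d) :
    Continuous (fun F : Streamm d => streamMeas n₀ F (dyadicCube k lam W x)) := by
  have hfin := finite_center_dyadicCube hn₀ k lam W x
  have heq : (fun F : Streamm d => streamMeas n₀ F (dyadicCube k lam W x))
      = fun F => ∑ e ∈ hfin.toFinset, ((n₀:ℝ)^d)⁻¹ • streamVec F e :=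
    funext fun F => streamMeas_eq_sum F hfin
  rw [heq]
  apply continuous_finset_sum
  intro e _
  show Continuous fun F : Streamm d => ((n₀:ℝ)^d)⁻¹ • (F e • bvec e.2)
  fun_prop

lemma isClosed_ddist_le {n₀ : ℕ} (hn₀ : 1 ≤ n₀) (μt : Set (Rd d) → Rd d) (c : ℝ≥0∞) :
    IsClosed {F : Streamm d | ddist (streamMeas n₀ F) μt ≤ c} := by
  have hprod : ∀ (F : Streamm d) (x : Rd d) (lam : ℝ),
      (∑' k : ℕ, (2 : ℝ≥0∞)⁻¹ ^ k * ∑' W : Fin d → ℤ,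
        ENNReal.ofReal (nrm2 (μt (dyadicCube k lam W x)
          - streamMeas n₀ F (dyadicCube k lam W x))))
      = ∑' p : ℕ × (Fin d → ℤ), (2 : ℝ≥0∞)⁻¹ ^ p.1 *
        ENNReal.ofReal (nrm2 (μt (dyadicCube p.1 lam p.2 x)
          - streamMeas n₀ F (dyadicCube p.1 lam p.2 x))) := by
    intro F x lam
    rw [eq_comm]
    refine Eq.trans (ENNReal.tsum_prod (f := fun k W => (2:ℝ≥0∞)⁻¹^k *
      ENNReal.ofReal (nrm2 (μt (dyadicCube k lam W x)
        - streamMeas n₀ F (dyadicCube k lam W x))))) ?_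
    exact tsum_congr fun k => ENNReal.tsum_mul_left
  have hset : {F : Streamm d | ddist (streamMeas n₀ F) μt ≤ c}
      = ⋂ (x : Rd d), ⋂ (_ : ∀ i, -1 ≤ x i ∧ x i < 1), ⋂ (lam : ℝ),
          ⋂ (_ : 1 ≤ lam ∧ lam ≤ 2), ⋂ (s : Finset (ℕ × (Fin d → ℤ))),
          {F | ∑ p ∈ s, (2 : ℝ≥0∞)⁻¹ ^ p.1 *
            ENNReal.ofReal (nrm2 (μt (dyadicCube p.1 lam p.2 x)
              - streamMeas n₀ F (dyadicCube p.1 lam p.2 x))) ≤ c} := by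
    ext F
    simp only [Set.mem_setOf_eq, Set.mem_iInter, ddist, iSup_le_iff]
    constructor
    · intro h x hx lam hlam s
      refine le_trans (le_trans (ENNReal.sum_le_tsum s) ?_) (h x hx lam hlam)
      exact le_of_eq (hprod F x lam).symm
    · intro h x hx lam hlam
      rw [hprod F x lam, ENNReal.tsum_eq_iSup_sum]
      exact iSup_le fun s => h x hx lam hlam s
  rw [hset]
  refine isClosed_iInter fun x => isClosed_iInter fun _ => isClosed_iInter fun lam =>
    isClosed_iInter fun _ => isClosed_iInter fun s => ?_
  refine isClosed_le ?_ continuous_const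
  apply continuous_finset_sum
  intro p _
  refine ENNReal.continuous_const_mul (by
    exact ENNReal.pow_ne_top (by norm_num)) |>.comp ?_
  refine ENNReal.continuous_ofReal.comp ?_
  refine continuous_nrm2.comp ?_
  exact continuous_const.sub (continuous_streamMeas_cube hn₀ p.1 lam p.2 x)

lemma isCompact_Kset {n₀ : ℕ} (hn₀ : 1 ≤ n₀) (μt : Set (Rd d) → Rd d) (ε : ℝ) (j : ℕ) :
    IsCompact (Kset d n₀ μt ε j) := by
  have hsub : Kset d n₀ μt ε j ⊆ Set.pi Set.univ (fun _ : Edge d => Set.Icc (-(j:ℝ)) (j:ℝ)) := by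
    intro F hF e _
    exact hF.1 e
  have hclosed : IsClosed (Kset d n₀ μt ε j) := by
    have : Kset d n₀ μt ε j =
        (⋂ e : Edge d, {F : Streamm d | F e ∈ Set.Icc (-(j:ℝ)) (j:ℝ)}) ∩
        ((⋂ z : Fin d → ℤ, ⋂ (_ : pt n₀ z ∈ unitCube d),
          ⋂ (_ : ∀ i : Fin d, pt n₀ (unshift z i) ∈ unitCube d),
          {F : Streamm d | ∑ i : Fin d, (F (z, i) - F (unshift z i, i)) = 0}) ∩
        {F : Streamm d | ddist (streamMeas n₀ F) μt ≤ ENNReal.ofReal ε}) := by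
      ext F
      simp only [Kset, Set.mem_setOf_eq, Set.mem_inter_iff, Set.mem_iInter, nodeLaw]
    rw [this]
    refine IsClosed.inter ?_ (IsClosed.inter ?_ (isClosed_ddist_le hn₀ μt _))
    · exact isClosed_iInter fun e => IsClosed.preimage (continuous_apply e) isClosed_Icc
    · refine isClosed_iInter fun z => isClosed_iInter fun _ => isClosed_iInter fun _ => ?_
      refine isClosed_eq ?_ continuous_const
      exact continuous_finset_sum _ fun i _ =>
        (continuous_apply (z, i)).sub (continuous_apply (unshift z i, i))
  exact (isCompact_univ_pi fun _ => isCompact_Icc).of_isClosed_subset hclosed hsub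

/-- the set of capacity vectors admitting a `j`-bounded admissible stream -/
def MSetj (d : ℕ) (n₀ : ℕ) (μt : Set (Rd d) → Rd d) (ε : ℝ) (j : ℕ) :
    Set ({e : Edge d // pt n₀ e.1 ∈ unitCube d} → ℝ) :=
  {v | ∃ F ∈ Kset d n₀ μt ε j,
    ∀ e : {e : Edge d // pt n₀ e.1 ∈ unitCube d}, |F e.1| ≤ v e}

lemma isClosed_MSetj {n₀ : ℕ} (hn₀ : 1 ≤ n₀) (μt : Set (Rd d) → Rd d) (ε : ℝ) (j : ℕ) :
    IsClosed (MSetj d n₀ μt ε j) := by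
  classical
  rw [isClosed_iff_clusterPt]
  intro v hv
  haveI hne : (𝓝 v ⊓ 𝓟 (MSetj d n₀ μt ε j)).NeBot := hv
  set φ : ({e : Edge d // pt n₀ e.1 ∈ unitCube d} → ℝ) → Streamm d := fun v' =>
    if h : v' ∈ MSetj d n₀ μt ε j then h.choose else (fun _ => 0) with hφdef
  have hφK : ∀ v' ∈ MSetj d n₀ μt ε j, φ v' ∈ Kset d n₀ μt ε j ∧
      ∀ e : {e : Edge d // pt n₀ e.1 ∈ unitCube d}, |φ v' e.1| ≤ v' e := by
    intro v' h
    rw [hφdef]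
    simp only [dif_pos h]
    exact ⟨h.choose_spec.1, h.choose_spec.2⟩
  set g := Filter.map φ (𝓝 v ⊓ 𝓟 (MSetj d n₀ μt ε j)) with hgdef
  have hgle : g ≤ 𝓟 (Kset d n₀ μt ε j) := by
    rw [Filter.le_principal_iff, hgdef, Filter.mem_map]
    exact Filter.mem_of_superset
      (Filter.mem_inf_of_right (Filter.mem_principal_self _))
      (fun v' hv' => (hφK v' hv').1)
  haveI : g.NeBot := hne.map φ
  obtain ⟨F₀, hF₀K, hcl⟩ := (isCompact_Kset hn₀ μt ε j).exists_clusterPt hgle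
  refine ⟨F₀, hF₀K, fun e => ?_⟩
  by_contra hgt
  push_neg at hgt
  set η := (|F₀ e.1| - v e)/2 with hηdef
  have hηpos : 0 < η := by rw [hηdef]; linarith
  have hU : {F' : Streamm d | v e + η < |F' e.1|} ∈ 𝓝 F₀ := by
    refine IsOpen.mem_nhds ?_ ?_
    · exact isOpen_lt continuous_const ((continuous_apply e.1).abs)
    · show v e + η < |F₀ e.1|
      rw [hηdef]; linarith
  have hV : {v' : {e : Edge d // pt n₀ e.1 ∈ unitCube d} → ℝ | v' e < v e + η} ∈ 𝓝 v := by
    refine IsOpen.mem_nhds ?_ ?_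
    · exact isOpen_lt (continuous_apply e) continuous_const
    · show v e < v e + η
      linarith
  have hVT : φ '' ({v' | v' e < v e + η} ∩ MSetj d n₀ μt ε j) ∈ g :=
    Filter.image_mem_map (Filter.inter_mem (Filter.mem_inf_of_left hV)
      (Filter.mem_inf_of_right (Filter.mem_principal_self _)))
  haveI : (𝓝 F₀ ⊓ g).NeBot := hcl
  obtain ⟨F', hF'U, hF'im⟩ := Filter.nonempty_of_mem
    (Filter.inter_mem (Filter.mem_inf_of_left hU) (Filter.mem_inf_of_right hVT))
  obtain ⟨v', ⟨hv'e, hv'T⟩, rfl⟩ := hF'im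
  have h1 := (hφK v' hv'T).2 e
  have h2 : v e + η < |φ v' e.1| := hF'U
  have h3 : v' e < v e + η := hv'e
  linarith

/-- the full admissible capacity set -/
def MSet (d : ℕ) (n₀ : ℕ) (μt : Set (Rd d) → Rd d) (ε : ℝ) :
    Set ({e : Edge d // pt n₀ e.1 ∈ unitCube d} → ℝ) :=
  ⋃ j : ℕ, MSetj d n₀ μt ε j

lemma measurableSet_MSet {n₀ : ℕ} (hn₀ : 1 ≤ n₀) (μt : Set (Rd d) → Rd d) (ε : ℝ) :
    MeasurableSet (MSet d n₀ μt ε) :=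
  MeasurableSet.iUnion fun j => (isClosed_MSetj hn₀ μt ε j).measurableSet

end Closedness

section Glue
variable {d : ℕ}

lemma finite_unitCube_edges {n₀ : ℕ} (hn₀ : 1 ≤ n₀) :
    {e : Edge d | pt n₀ e.1 ∈ unitCube d}.Finite := by
  have hnpos : (0:ℝ) < n₀ := by exact_mod_cast hn₀
  have hsub : {e : Edge d | pt n₀ e.1 ∈ unitCube d} ⊆
      {z : Fin d → ℤ | ∀ j, -(n₀:ℝ)/2 ≤ (z j : ℝ) ∧ (z j : ℝ) ≤ (n₀:ℝ)/2} ×ˢ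
      (Set.univ : Set (Fin d)) := by
    rintro ⟨z, i⟩ he
    refine ⟨fun j => ?_, trivial⟩
    have h1 := (he j).1
    have h2 := (he j).2
    have hptj : pt n₀ z j = (z j : ℝ) / n₀ := rfl
    rw [hptj] at h1 h2
    rw [le_div_iff₀ hnpos] at h1
    rw [div_lt_iff₀ hnpos] at h2
    constructor <;> nlinarith
  refine Set.Finite.subset ?_ hsub
  refine Set.Finite.prod ?_ Set.finite_univ
  refine Set.Finite.subset (Set.Finite.pi (fun j => finite_int_box (-(n₀:ℝ)/2) ((n₀:ℝ)/2))) ?_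
  intro z hz j _
  exact hz j

/-- joint law of a finite injectively-indexed subfamily of the capacities -/
lemma map_eval_pi {Ω' : Type*} [MeasurableSpace Ω'] (P : Measure Ω') [IsProbabilityMeasure P]
    {G : Measure ℝ} [IsProbabilityMeasure G]
    (t : Edge d → Ω' → ℝ) (hmeas : ∀ e, Measurable (t e))
    (hlaw : ∀ e, P.map (t e) = G)
    (hindep : ProbabilityTheory.iIndepFun t P)
    {E : Type*} [Fintype E] (ι : E → Edge d) (hι : Function.Injective ι) :
    P.map (fun ω (e : E) => t (ι e) ω) = Measure.pi (fun _ : E => G) := by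
  classical
  have hX : Measurable (fun ω (e : E) => t (ι e) ω) :=
    measurable_pi_lambda _ (fun e => hmeas (ι e))
  refine (Measure.pi_eq fun s hs => ?_).symm
  rw [Measure.map_apply hX (MeasurableSet.univ_pi hs)]
  set sets' : Edge d → Set ℝ := Function.extend ι s (fun _ => Set.univ) with hsets'def
  have hsets' : ∀ e : E, sets' (ι e) = s e := fun e => hι.extend_apply s _ e
  have hmeas' : ∀ ed, MeasurableSet (sets' ed) := by
    intro ed
    rw [hsets'def, Function.extend_def]
    split
    · exact hs _
    · exact MeasurableSet.univ
  have hpre : (fun ω (e : E) => t (ι e) ω) ⁻¹' (Set.pi Set.univ s)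
      = ⋂ ed ∈ Finset.image ι Finset.univ, t ed ⁻¹' sets' ed := by
    ext ω
    simp only [Set.mem_preimage, Set.mem_pi, Set.mem_univ, forall_true_left,
      Set.mem_iInter, Finset.mem_image, Finset.mem_univ, true_and]
    constructor
    · rintro h ed ⟨e, rfl⟩
      rw [hsets' e]
      exact h e
    · intro h e
      have := h (ι e) ⟨e, rfl⟩
      rwa [hsets' e] at this
  rw [hpre]
  have := hindep.measure_inter_preimage_eq_mul (Finset.image ι Finset.univ)
    (sets := sets') (fun ed _ => hmeas' ed)
  rw [this, Finset.prod_image (fun e _ e' _ h => hι h)]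
  refine Finset.prod_congr rfl fun e _ => ?_
  rw [hsets' e, ← Measure.map_apply (hmeas (ι e)) (hs e), hlaw (ι e)]

end Glue

section Bijections
variable {d : ℕ} {n n₀ : ℕ}

lemma bijOn_lattice (hn₀ : 1 ≤ n₀) (hn : n₀ ≤ n) (w : Fin d → ℤ) :
    Set.BijOn (homoth (pt n w) ((n₀ : ℝ) / n))
      {p : Rd d | ∃ z : Fin d → ℤ, p = pt n₀ z} {p : Rd d | ∃ z : Fin d → ℤ, p = pt n z} := by
  have hn₀' : (0:ℝ) < (n₀:ℝ) := by exact_mod_cast hn₀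
  have hn' : (0:ℝ) < (n:ℝ) := by exact_mod_cast le_trans hn₀ hn
  have hδ : ((n₀:ℝ)/n) ≠ 0 := by positivity
  refine ⟨?_, ?_, ?_⟩
  · rintro p ⟨z, rfl⟩
    exact ⟨z + w, (pt_homoth hn₀ hn w z).symm ▸ rfl⟩
  · intro p _ q _ hpq
    exact homoth_injective hδ hpq
  · rintro p ⟨z, rfl⟩
    refine ⟨pt n₀ (z - w), ⟨z - w, rfl⟩, ?_⟩
    rw [pt_homoth hn₀ hn w (z - w), sub_add_cancel]

lemma bijOn_edges (hn₀ : 1 ≤ n₀) (hn : n₀ ≤ n) (w : Fin d → ℤ) :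
    Set.BijOn
      (Prod.map (homoth (pt n w) ((n₀ : ℝ) / n)) (homoth (pt n w) ((n₀ : ℝ) / n)))
      {q : Rd d × Rd d | ∃ (z : Fin d → ℤ) (i : Fin d), q = (pt n₀ z, pt n₀ (shift z i))}
      {q : Rd d × Rd d | ∃ (z : Fin d → ℤ) (i : Fin d), q = (pt n z, pt n (shift z i))} := by
  have hn₀' : (0:ℝ) < (n₀:ℝ) := by exact_mod_cast hn₀
  have hn' : (0:ℝ) < (n:ℝ) := by exact_mod_cast le_trans hn₀ hn
  have hδ : ((n₀:ℝ)/n) ≠ 0 := by positivity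
  refine ⟨?_, ?_, ?_⟩
  · rintro q ⟨z, i, rfl⟩
    refine ⟨z + w, i, ?_⟩
    show (homoth (pt n w) ((n₀:ℝ)/n) (pt n₀ z), homoth (pt n w) ((n₀:ℝ)/n) (pt n₀ (shift z i)))
      = (pt n (z + w), pt n (shift (z + w) i))
    rw [pt_homoth hn₀ hn w z, pt_homoth hn₀ hn w (shift z i), shift_add]
  · intro q _ q' _ hqq
    have hinj := homoth_injective (x := pt n w) hδ
    exact (hinj.prodMap hinj) hqq
  · rintro q ⟨z, i, rfl⟩
    refine ⟨(pt n₀ (z - w), pt n₀ (shift (z - w) i)), ⟨z - w, i, rfl⟩, ?_⟩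
    show (homoth (pt n w) ((n₀:ℝ)/n) (pt n₀ (z - w)),
        homoth (pt n w) ((n₀:ℝ)/n) (pt n₀ (shift (z - w) i))) = (pt n z, pt n (shift z i))
    rw [pt_homoth hn₀ hn w (z - w), pt_homoth hn₀ hn w (shift (z - w) i), ← shift_add,
      sub_add_cancel]

end Bijections

/-- Lemma 5.5, scaling and translation 2.
Fix `d ≥ 2` and i.i.d. capacities of compactly supported law `G` on `[0,∞)`.  Let
`σ ∈ L^∞(ℝ^d → ℝ^d)`, `ε > 0`, `n ≥ 1`, `x = w/n ∈ ℤ_n^d`, `1 ≤ n₀ ≤ n`, `δ = n₀/n`.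
Then `π_{x,δ}` maps `ℤ_{n₀}^d` bijectively onto `ℤ_n^d` (hence induces a bijection from
`𝔼_{n₀}^d` onto `𝔼_n^d`), and
`P(∃ f_n ∈ S_n(π_{x,δ}(𝔠)) : 𝔡(μ_n(f_n), σ𝟙_{π_{x,δ}(𝔠)}ℒ^d) ≤ (1/2)(n₀/n)^{d+1} ε)`
`≤ P(∃ f_{n₀} ∈ S_{n₀}(𝔠) : 𝔡(μ_{n₀}(f_{n₀}), (σ∘π_{x,δ})𝟙_𝔠 ℒ^d) ≤ ε)`. -/
theorem statement8
    (d : ℕ) (hd : 2 ≤ d)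
    (G : Measure ℝ) (hGprob : IsProbabilityMeasure G)
    (hGnonneg : G (Set.Iio 0) = 0) (hGbdd : ∃ b : ℝ, G (Set.Ici b) = 0)
    {Ω' : Type*} [MeasurableSpace Ω'] (P : Measure Ω') (hP : IsProbabilityMeasure P)
    (t : Edge d → Ω' → ℝ) (hmeas : ∀ e, Measurable (t e))
    (hlaw : ∀ e, P.map (t e) = G)
    (hindep : ProbabilityTheory.iIndepFun t P)
    (σ : Rd d → Rd d) (hσmeas : Measurable σ)
    (hσbd : ∃ C : ℝ, ∀ᵐ x ∂(volume : Measure (Rd d)), nrm2 (σ x) ≤ C)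
    (ε : ℝ) (hε : 0 < ε) (n n₀ : ℕ) (hn₀ : 1 ≤ n₀) (hn : n₀ ≤ n)
    (w : Fin d → ℤ) :
    Set.BijOn (homoth (pt n w) ((n₀ : ℝ) / n))
        {p : Rd d | ∃ z : Fin d → ℤ, p = pt n₀ z} {p : Rd d | ∃ z : Fin d → ℤ, p = pt n z}
    ∧ Set.BijOn
        (Prod.map (homoth (pt n w) ((n₀ : ℝ) / n)) (homoth (pt n w) ((n₀ : ℝ) / n)))
        {q : Rd d × Rd d | ∃ (z : Fin d → ℤ) (i : Fin d), q = (pt n₀ z, pt n₀ (shift z i))}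
        {q : Rd d × Rd d | ∃ (z : Fin d → ℤ) (i : Fin d), q = (pt n z, pt n (shift z i))}
    ∧ P {ω | ∃ F : Streamm d,
          memSnSet n (fun e => t e ω) (homoth (pt n w) ((n₀ : ℝ) / n) '' unitCube d) F ∧
          ddist (streamMeas n F)
            (densMeas (Set.indicator (homoth (pt n w) ((n₀ : ℝ) / n) '' unitCube d) σ))
            ≤ ENNReal.ofReal ((1 / 2) * ((n₀ : ℝ) / n) ^ (d + 1) * ε)}
      ≤ P {ω | ∃ F : Streamm d, memSnSet n₀ (fun e => t e ω) (unitCube d) F ∧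
          ddist (streamMeas n₀ F)
            (densMeas (Set.indicator (unitCube d)
              fun y => σ (homoth (pt n w) ((n₀ : ℝ) / n) y)))
            ≤ ENNReal.ofReal ε} := by
  classical
  haveI := hP
  haveI := hGprob
  have hn' : 1 ≤ n := le_trans hn₀ hn
  refine ⟨bijOn_lattice hn₀ hn w, bijOn_edges hn₀ hn w, ?_⟩
  have hn₀R : (0:ℝ) < (n₀:ℝ) := by exact_mod_cast hn₀
  have hnR : (0:ℝ) < (n:ℝ) := by exact_mod_cast hn'
  have hδ : ((n₀:ℝ)/n) ≠ 0 := by positivity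
  set μt₀ := densMeas (Set.indicator (unitCube d)
    fun y => σ (homoth (pt n w) ((n₀:ℝ)/n) y)) with hμt₀def
  obtain ⟨C, hC⟩ := hσbd
  set C' : ℝ := max C 0 * 2^d with hC'def
  have hC'0 : 0 ≤ C' := by positivity
  have hbd : ∀ (k : ℕ) (W : Fin d → ℤ) (x : Rd d), (∀ i, -1 ≤ x i ∧ x i < 1) →
      ∀ i, |μt₀ (dyadicCube k 1 W x) i| ≤ C' := by
    intro k W x _ i
    rw [hμt₀def, hC'def]
    exact densMeas_cube_bound (fun y => σ (homoth (pt n w) ((n₀:ℝ)/n) y))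
      (ae_comp_homoth hδ hC) (unitCube d) k (by norm_num) (by norm_num) W x i
  haveI hEfin : Fintype {e : Edge d // pt n₀ e.1 ∈ unitCube d} :=
    (finite_unitCube_edges hn₀).fintype
  set M := MSet d n₀ μt₀ ε with hMdef
  have hMmeas : MeasurableSet M := measurableSet_MSet hn₀ μt₀ ε
  have hXmeas : Measurable (fun ω (e : {e : Edge d // pt n₀ e.1 ∈ unitCube d}) => t e.1 ω) :=
    measurable_pi_lambda _ (fun e => hmeas e.1)
  have hYmeas : Measurable
      (fun ω (e : {e : Edge d // pt n₀ e.1 ∈ unitCube d}) => t (edgeShift w e.1) ω) :=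
    measurable_pi_lambda _ (fun e => hmeas _)
  have hlawX : P.map (fun ω (e : {e : Edge d // pt n₀ e.1 ∈ unitCube d}) => t e.1 ω)
      = Measure.pi (fun _ => G) :=
    map_eval_pi P t hmeas hlaw hindep (fun e : {e : Edge d // pt n₀ e.1 ∈ unitCube d} => e.1)
      Subtype.val_injective
  have hlawY : P.map (fun ω (e : {e : Edge d // pt n₀ e.1 ∈ unitCube d}) => t (edgeShift w e.1) ω)
      = Measure.pi (fun _ => G) :=
    map_eval_pi P t hmeas hlaw hindep
      (fun e : {e : Edge d // pt n₀ e.1 ∈ unitCube d} => edgeShift w e.1)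
      (by intro a b hab; exact Subtype.ext ((edgeShift w).injective hab))
  have hA : {ω | ∃ F : Streamm d,
        memSnSet n (fun e => t e ω) (homoth (pt n w) ((n₀:ℝ)/n) '' unitCube d) F ∧
        ddist (streamMeas n F)
          (densMeas (Set.indicator (homoth (pt n w) ((n₀:ℝ)/n) '' unitCube d) σ))
          ≤ ENNReal.ofReal ((1/2) * ((n₀:ℝ)/n)^(d+1) * ε)}
      ⊆ (fun ω (e : {e : Edge d // pt n₀ e.1 ∈ unitCube d}) => t (edgeShift w e.1) ω) ⁻¹' M := by
    rintro ω ⟨F, hmem, hdd⟩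
    set F₀ : Streamm d := fun e => F (edgeShift w e) with hF₀def
    have hdd₀ : ddist (streamMeas n₀ F₀) μt₀ ≤ ENNReal.ofReal ε :=
      ddist_homoth hn₀ hn w F σ hε.le hdd
    have hFbd := stream_ddist_bound hn₀ F₀ μt₀ hC'0 hbd hε.le hdd₀
    set R := (n₀:ℝ)^d * (2^(n₀+1) * ε + C') with hRdef
    refine Set.mem_preimage.mpr (Set.mem_iUnion.mpr ⟨⌈R⌉₊, F₀, ⟨?_, ?_, hdd₀⟩, ?_⟩)
    · intro e
      have habs : |F₀ e| ≤ ((⌈R⌉₊ : ℕ) : ℝ) := le_trans (hFbd e) (Nat.le_ceil R)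
      exact Set.mem_Icc.mpr (abs_le.mp habs)
    · intro z hz hz'
      rw [hF₀def, nodeLaw_edgeShift]
      apply hmem.2 (z + w)
      · rw [← pt_homoth hn₀ hn w z]
        exact Set.mem_image_of_mem _ hz
      · intro i
        rw [unshift_add, ← pt_homoth hn₀ hn w (unshift z i)]
        exact Set.mem_image_of_mem _ (hz' i)
    · intro e
      exact hmem.1 (edgeShift w e.1) (by
        show pt n (e.1.1 + w) ∈ _
        rw [← pt_homoth hn₀ hn w e.1.1]
        exact Set.mem_image_of_mem _ e.2)
  have hB : (fun ω (e : {e : Edge d // pt n₀ e.1 ∈ unitCube d}) => t e.1 ω) ⁻¹' M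
      ⊆ {ω | ∃ F : Streamm d, memSnSet n₀ (fun e => t e ω) (unitCube d) F ∧
      ddist (streamMeas n₀ F) μt₀ ≤ ENNReal.ofReal ε} := by
    intro ω hω
    obtain ⟨j, F, hFK, hcaps⟩ := Set.mem_iUnion.mp hω
    exact ⟨F, ⟨fun e he => hcaps ⟨e, he⟩, hFK.2.1⟩, hFK.2.2⟩
  have hmid : P ((fun ω (e : {e : Edge d // pt n₀ e.1 ∈ unitCube d}) => t (edgeShift w e.1) ω) ⁻¹' M)
      = P ((fun ω (e : {e : Edge d // pt n₀ e.1 ∈ unitCube d}) => t e.1 ω) ⁻¹' M) := by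
    rw [← Measure.map_apply hYmeas hMmeas, ← Measure.map_apply hXmeas hMmeas, hlawX, hlawY]
  exact le_trans (measure_mono hA) (le_trans (le_of_eq hmid) (measure_mono hB))

end FPP
end

section
/- Let M > 0 and n ≥ 1, and work in dimension d = 2. For any real numbers (f_in(j))_{j=1,…,n} with |f_in(j)| ≤ M for all j, there exists a stream f : 𝔼² → ℝ² such that: (i) f(e) = 0 for every edge e not belonging to [0,n)×[1,n]; (ii) ‖f(e)‖₂ ≤ M for every e ∈ 𝔼²; (iii) f(⟨(0,j),(1,j)⟩) = f_in(j)·e₁ and f(⟨(n−1,j),(n,j)⟩) = (n^{−1} Σ_{i=1}^n f_in(i))·e₁ for every j ∈ {1,…,n}; (iv) the node law holds at every vertex of ℤ² ∖ (({0}×{1,…,n}) ∪ ({n}×{1,…,n})). -/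
open scoped ENNReal

namespace FPP

/- auxiliary lemmas -/

lemma sum_split' (f : ℤ → ℝ) (a b c : ℤ) (h1 : a ≤ b) (h2 : b ≤ c) :
    ∑ k ∈ Finset.Ioc a b, f k + ∑ k ∈ Finset.Ioc b c, f k = ∑ k ∈ Finset.Ioc a c, f k := by
  rw [← Finset.Ioc_union_Ioc_eq_Ioc h1 h2, Finset.sum_union]
  rw [Finset.disjoint_left]
  intro x hx hy
  simp only [Finset.mem_Ioc] at hx hy
  omega

lemma sum_top' (f : ℤ → ℝ) (a b : ℤ) (h : a ≤ b) :
    ∑ k ∈ Finset.Ioc a (b+1), f k = (∑ k ∈ Finset.Ioc a b, f k) + f (b+1) := by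
  rw [← sum_split' f a b (b+1) h (by omega)]
  have : Finset.Ioc b (b+1) = {b+1} := by ext k; simp [Finset.mem_Ioc]; omega
  rw [this, Finset.sum_singleton]

lemma sum_bd0 (s : Finset ℤ) (f : ℤ → ℝ) (M : ℝ) (h : ∀ k ∈ s, |f k| ≤ M) :
    |∑ k ∈ s, f k| ≤ s.card * M := by
  calc |∑ k ∈ s, f k| ≤ ∑ k ∈ s, |f k| := Finset.abs_sum_le_sum_abs _ _
  _ ≤ s.card * M := by
      rw [← nsmul_eq_mul]; exact Finset.sum_le_card_nsmul s _ M h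

lemma sum_bd' (f : ℤ → ℝ) (M : ℝ) (a b : ℤ) (hab : a ≤ b)
    (h : ∀ k, a < k → k ≤ b → |f k| ≤ M) :
    |∑ k ∈ Finset.Ioc a b, f k| ≤ ((b : ℝ) - (a : ℝ)) * M := by
  have hb := sum_bd0 (Finset.Ioc a b) f M
    (by intro k hk; simp only [Finset.mem_Ioc] at hk; exact h k hk.1 hk.2)
  have hc : ((Finset.Ioc a b).card : ℝ) = (b : ℝ) - a := by
    rw [Int.card_Ioc, ← Int.cast_natCast (R := ℝ), Int.toNat_of_nonneg (by omega : (0:ℤ) ≤ b - a)]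
    push_cast; ring
  rw [hc] at hb
  exact hb

lemma icc_eq_ioc (m : ℤ) : Finset.Icc (1:ℤ) m = Finset.Ioc 0 m := by
  ext k; simp [Finset.mem_Icc, Finset.mem_Ioc]; omega

/-- horizontal component -/
noncomputable def Hf (n : ℕ) (fin : ℤ → ℝ) (x j : ℤ) : ℝ :=
  if 0 ≤ x ∧ x ≤ (n:ℤ)-1 ∧ 1 ≤ j ∧ j ≤ (n:ℤ) then
    fin j + ((x:ℝ)/((n:ℝ)-1)) * ((∑ k ∈ Finset.Ioc (0:ℤ) (n:ℤ), fin k)/(n:ℝ) - fin j)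
  else 0

/-- vertical component -/
noncomputable def Vf (n : ℕ) (fin : ℤ → ℝ) (x j : ℤ) : ℝ :=
  if 1 ≤ x ∧ x ≤ (n:ℤ)-1 ∧ 1 ≤ j ∧ j ≤ (n:ℤ)-1 then
    ((∑ k ∈ Finset.Ioc (0:ℤ) j, fin k)
      - (j:ℝ) * ((∑ k ∈ Finset.Ioc (0:ℤ) (n:ℤ), fin k)/(n:ℝ)))/((n:ℝ)-1)
  else 0

/-- the stream -/
noncomputable def Ff (n : ℕ) (fin : ℤ → ℝ) : Streamm 2 :=
  fun e => if e.2 = 0 then Hf n fin (e.1 0) (e.1 1) else Vf n fin (e.1 0) (e.1 1)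

lemma Ff_apply0 (n : ℕ) (fin : ℤ → ℝ) (z : Fin 2 → ℤ) :
    Ff n fin (z, 0) = Hf n fin (z 0) (z 1) := rfl

lemma Ff_apply1 (n : ℕ) (fin : ℤ → ℝ) (z : Fin 2 → ℤ) :
    Ff n fin (z, 1) = Vf n fin (z 0) (z 1) := rfl

set_option maxHeartbeats 2000000 in
/-- Lemma 4.2, mixing in dimension 2.
Let `M > 0`, `n ≥ 1` and `(f_in(j))_{1 ≤ j ≤ n}` with `|f_in(j)| ≤ M`.  There is a stream
`f : 𝔼² → ℝ²` vanishing on edges whose left endpoint is outside `[0,n) × [1,n]`, with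
`‖f(e)‖₂ ≤ M` everywhere, with `f(⟨(0,j),(1,j)⟩) = f_in(j) e₁` and
`f(⟨(n-1,j),(n,j)⟩) = (n⁻¹ ∑_{i=1}^n f_in(i)) e₁` for every `j ∈ {1,…,n}`, and satisfying
the node law at every vertex outside `({0} × {1,…,n}) ∪ ({n} × {1,…,n})`. -/
theorem statement15 (M : ℝ) (hM : 0 < M) (n : ℕ) (hn : 1 ≤ n)
    (fin : ℤ → ℝ) (hfin : ∀ j : ℤ, 1 ≤ j → j ≤ (n : ℤ) → |fin j| ≤ M) :
    ∃ F : Streamm 2,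
      (∀ e : Edge 2,
        ¬(0 ≤ e.1 0 ∧ e.1 0 < (n : ℤ) ∧ 1 ≤ e.1 1 ∧ e.1 1 ≤ (n : ℤ)) → F e = 0) ∧
      (∀ e : Edge 2, |F e| ≤ M) ∧
      (∀ j : ℤ, 1 ≤ j → j ≤ (n : ℤ) →
        F (![0, j], 0) = fin j ∧
        F (![(n : ℤ) - 1, j], 0) = (1 / (n : ℝ)) * ∑ i ∈ Finset.Icc (1 : ℤ) (n : ℤ), fin i) ∧
      (∀ z : Fin 2 → ℤ,
        ¬(z 0 = 0 ∧ 1 ≤ z 1 ∧ z 1 ≤ (n : ℤ)) →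
        ¬(z 0 = (n : ℤ) ∧ 1 ≤ z 1 ∧ z 1 ≤ (n : ℤ)) →
        nodeLaw F z) := by
  have hn0 : (0:ℝ) < (n:ℝ) := by exact_mod_cast Nat.pos_of_ne_zero (by omega)
  have hSsucc : ∀ j : ℤ, 1 ≤ j →
      (∑ k ∈ Finset.Ioc (0:ℤ) j, fin k)
        = (∑ k ∈ Finset.Ioc (0:ℤ) (j-1), fin k) + fin j := by
    intro j hj
    have := sum_top' fin 0 (j-1) (by omega)
    rw [show j - 1 + 1 = j by ring] at this
    exact this
  have hSbd : ∀ j : ℤ, 0 ≤ j → j ≤ (n:ℤ) →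
      |∑ k ∈ Finset.Ioc (0:ℤ) j, fin k| ≤ (j:ℝ) * M := by
    intro j h0 h1
    have := sum_bd' fin M 0 j h0 (fun k hk1 hk2 => hfin k hk1 (by omega))
    simpa using this
  have hTbd : ∀ j : ℤ, 0 ≤ j → j ≤ (n:ℤ) →
      |(∑ k ∈ Finset.Ioc (0:ℤ) (n:ℤ), fin k) - ∑ k ∈ Finset.Ioc (0:ℤ) j, fin k|
        ≤ ((n:ℝ) - (j:ℝ)) * M := by
    intro j h0 h1
    have hsp := sum_split' fin 0 j n h0 h1
    have heq : (∑ k ∈ Finset.Ioc (0:ℤ) (n:ℤ), fin k) - (∑ k ∈ Finset.Ioc (0:ℤ) j, fin k)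
        = ∑ k ∈ Finset.Ioc j (n:ℤ), fin k := by linarith [hsp]
    rw [heq]
    exact sum_bd' fin M j n h1 (fun k hk1 hk2 => hfin k (by omega) hk2)
  have hAbd : |(∑ k ∈ Finset.Ioc (0:ℤ) (n:ℤ), fin k) / (n:ℝ)| ≤ M := by
    rw [abs_div, abs_of_pos hn0, div_le_iff₀ hn0]
    have := hSbd n (by omega) le_rfl
    push_cast at this
    linarith [this]
  refine ⟨Ff n fin, ?_, ?_, ?_, ?_⟩
  · -- vanishing outside the block
    rintro ⟨z, i⟩ h
    replace h : ¬(0 ≤ z 0 ∧ z 0 < (n:ℤ) ∧ 1 ≤ z 1 ∧ z 1 ≤ (n:ℤ)) := h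
    fin_cases i
    · show Ff n fin (z, 0) = 0
      rw [Ff_apply0, Hf, if_neg (by omega)]
    · show Ff n fin (z, 1) = 0
      rw [Ff_apply1, Vf, if_neg (by omega)]
  · -- bound
    rintro ⟨z, i⟩
    fin_cases i
    · show |Ff n fin (z, 0)| ≤ M
      rw [Ff_apply0, Hf]
      split_ifs with h
      · obtain ⟨h1, h2, h3, h4⟩ := h
        have hfj := hfin _ h3 h4
        by_cases hn2 : 2 ≤ n
        · have hx0 : (0:ℝ) ≤ (z 0 : ℝ) := by exact_mod_cast h1
          have hnn : (0:ℝ) < (n:ℝ) - 1 := by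
            have : (2:ℝ) ≤ (n:ℝ) := by exact_mod_cast hn2
            linarith
          have hx1 : (z 0 : ℝ) ≤ (n:ℝ) - 1 := by
            have : (z 0 : ℝ) ≤ ((n:ℤ) : ℝ) - 1 := by exact_mod_cast h2
            simpa using this
          set t : ℝ := (z 0 : ℝ)/((n:ℝ)-1) with ht
          have ht0 : 0 ≤ t := div_nonneg hx0 (le_of_lt hnn)
          have ht1 : t ≤ 1 := by rw [ht, div_le_one hnn]; linarith
          rw [abs_le] at hfj hAbd ⊢
          constructor
          · nlinarith [hfj.1, hfj.2, hAbd.1, hAbd.2]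
          · nlinarith [hfj.1, hfj.2, hAbd.1, hAbd.2]
        · have : n = 1 := by omega
          subst this
          simp only [Nat.cast_one, sub_self, div_zero, zero_mul, add_zero]
          exact hfj
      · simpa using le_of_lt hM
    · show |Ff n fin (z, 1)| ≤ M
      rw [Ff_apply1, Vf]
      split_ifs with h
      · obtain ⟨h1, h2, h3, h4⟩ := h
        have hn2 : 2 ≤ n := by omega
        have hnn : (0:ℝ) < (n:ℝ) - 1 := by
          have : (2:ℝ) ≤ (n:ℝ) := by exact_mod_cast hn2
          linarith
        set j := z 1 with hj
        have hjr1 : (1:ℝ) ≤ (j:ℝ) := by exact_mod_cast h3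
        have hjr2 : (j:ℝ) ≤ (n:ℝ) - 1 := by
          have : (j : ℝ) ≤ ((n:ℤ) : ℝ) - 1 := by exact_mod_cast h4
          simpa using this
        have hb1 := hSbd j (by omega) (by omega)
        have hb2 := hTbd j (by omega) (by omega)
        set Sj : ℝ := ∑ k ∈ Finset.Ioc (0:ℤ) j, fin k with hSj'
        set Sn : ℝ := ∑ k ∈ Finset.Ioc (0:ℤ) (n:ℤ), fin k with hSn'
        have key : |Sj - (j:ℝ) * (Sn / n)| ≤ ((n:ℝ) - 1) * M := by
          have e1 : Sj - (j:ℝ) * (Sn / n)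
              = ((((n:ℝ) - j) * Sj) - (j:ℝ) * (Sn - Sj)) / n := by
            field_simp; ring
          rw [e1, abs_div, abs_of_pos hn0, div_le_iff₀ hn0]
          rw [abs_le] at hb1 hb2 ⊢
          constructor
          · nlinarith [hb1.1, hb1.2, hb2.1, hb2.2, sq_nonneg ((n:ℝ) - 2*(j:ℝ)), hM]
          · nlinarith [hb1.1, hb1.2, hb2.1, hb2.2, sq_nonneg ((n:ℝ) - 2*(j:ℝ)), hM]
        rw [abs_div, abs_of_pos hnn, div_le_iff₀ hnn]
        linarith [key]
      · simpa using le_of_lt hM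
  · -- boundary values
    intro j hj1 hj2
    constructor
    · rw [Ff_apply0]
      simp only [Matrix.cons_val_zero, Matrix.cons_val_one, Matrix.head_cons]
      rw [Hf, if_pos (by omega)]
      simp
    · rw [Ff_apply0]
      simp only [Matrix.cons_val_zero, Matrix.cons_val_one, Matrix.head_cons]
      rw [Hf, if_pos (by omega)]
      rw [icc_eq_ioc]
      by_cases hn2 : 2 ≤ n
      · have hnn : ((n:ℝ) - 1) ≠ 0 := by
          have : (2:ℝ) ≤ (n:ℝ) := by exact_mod_cast hn2
          linarith
        have : (((n:ℤ) - 1 : ℤ) : ℝ) = (n:ℝ) - 1 := by push_cast; ring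
        rw [this, div_self hnn]
        field_simp
        ring
      · have hh : n = 1 := by omega
        subst hh
        have hj : j = 1 := by omega
        subst hj
        norm_num
        rw [show Finset.Ioc (0:ℤ) (1:ℤ) = {1} by ext k; simp [Finset.mem_Ioc]; omega]
        simp
  · -- node law
    intro z hz1 hz2
    rw [nodeLaw, Fin.sum_univ_two, Ff_apply0, Ff_apply1, Ff_apply0, Ff_apply1]
    have hu00 : unshift z 0 0 = z 0 - 1 := by simp [unshift]
    have hu01 : unshift z 0 1 = z 1 := by simp [unshift]
    have hu10 : unshift z 1 0 = z 0 := by simp [unshift]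
    have hu11 : unshift z 1 1 = z 1 - 1 := by simp [unshift]
    rw [hu00, hu01, hu10, hu11]
    set x := z 0 with hx
    set j := z 1 with hj
    -- goal : (Hf n fin x j - Hf n fin (x-1) j) + (Vf n fin x j - Vf n fin x (j-1)) = 0
    by_cases hxr : 1 ≤ x ∧ x ≤ (n:ℤ) - 1
    · obtain ⟨hx1, hx2⟩ := hxr
      have hn2 : 2 ≤ n := by omega
      have hnn : ((n:ℝ) - 1) ≠ 0 := by
        have : (2:ℝ) ≤ (n:ℝ) := by exact_mod_cast hn2
        linarith
      have hnne : (n:ℝ) ≠ 0 := ne_of_gt hn0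
      rcases lt_or_ge j 1 with hj0 | hj1
      · rw [Hf, Hf, Vf, Vf, if_neg (by omega), if_neg (by omega), if_neg (by omega),
          if_neg (by omega)]
        ring
      · rcases lt_or_ge (n:ℤ) j with hjn | hjn
        · rw [Hf, Hf, Vf, Vf, if_neg (by omega), if_neg (by omega), if_neg (by omega),
            if_neg (by omega)]
          ring
        · -- 1 ≤ j ≤ n
          have hcx  : (((x - 1 : ℤ)) : ℝ) = (x:ℝ) - 1 := by push_cast; ring
          have hcj  : (((j - 1 : ℤ)) : ℝ) = (j:ℝ) - 1 := by push_cast; ring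
          rcases eq_or_lt_of_le hjn with hjeq | hjlt
          · -- j = n
            have hSn : (∑ k ∈ Finset.Ioc (0:ℤ) (j-1), fin k)
                = (∑ k ∈ Finset.Ioc (0:ℤ) (n:ℤ), fin k) - fin n := by
              have := hSsucc n (by omega)
              rw [hjeq]; linarith [this]
            by_cases hj1' : j = 1
            · -- n = 1 contradiction with hx
              omega
            · rw [Hf, Hf, Vf, Vf, if_pos (by omega), if_pos (by omega), if_neg (by omega),
                if_pos (by omega), hSn, hcx, hcj, hjeq]
              field_simp
              push_cast
              ring
          · -- 1 ≤ j ≤ n - 1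
            have hSj : (∑ k ∈ Finset.Ioc (0:ℤ) j, fin k)
                = (∑ k ∈ Finset.Ioc (0:ℤ) (j-1), fin k) + fin j := hSsucc j hj1
            by_cases hj1' : j = 1
            · have hS0 : (∑ k ∈ Finset.Ioc (0:ℤ) (j-1), fin k) = 0 := by
                rw [hj1']
                simp
              rw [Hf, Hf, Vf, Vf, if_pos (by omega), if_pos (by omega), if_pos (by omega),
                if_neg (by omega), hSj, hS0, hcx, hj1']
              push_cast
              field_simp
              ring
            · rw [Hf, Hf, Vf, Vf, if_pos (by omega), if_pos (by omega), if_pos (by omega),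
                if_pos (by omega), hSj, hcx, hcj]
              field_simp
              ring
    · -- all four terms vanish
      rw [Hf, Hf, Vf, Vf, if_neg (by omega), if_neg (by omega), if_neg (by omega),
        if_neg (by omega)]
      ring

end FPP
end

section
/- Let d ≥ 2, M > 0 and n ≥ 1. Let (f_in(y))_{y∈{1,…,n}^{d−1}} and (f_out(y))_{y∈{1,…,n}^{d−1}} be real numbers with |f_in(y)| ≤ M and |f_out(y)| ≤ M for all y, and Σ_y f_in(y) = Σ_y f_out(y). Then for every integer m ≥ 2(d−1)n there exists a stream f : 𝔼^d → ℝ^d such that: (i) f(e) = 0 for every edge e not belonging to [0,m)×[1,n]^{d−1}; (ii) ‖f(e)‖₂ ≤ M for every e; (iii) f(⟨(0,y),(1,y)⟩) = f_in(y)·e₁ and f(⟨(m−1,y),(m,y)⟩) = f_out(y)·e₁ for every y ∈ {1,…,n}^{d−1}; (iv) the node law holds at every vertex of ℤ^d ∖ (({0}×{1,…,n}^{d−1}) ∪ ({m}×{1,…,n}^{d−1})). Moreover, if the outputs are uniform, i.e. f_out(y) = n^{−(d−1)} Σ_{z∈{1,…,n}^{d−1}} f_in(z) for all y, then such a stream exists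 for every integer m ≥ (d−1)n. -/
open scoped ENNReal

namespace FPP

/-- the index box `{1,…,n}^{d-1}` (here `d = d₀ + 1`) -/
noncomputable def boxIdx (d₀ n : ℕ) : Finset (Fin d₀ → ℤ) :=
  Finset.Icc (fun _ => (1 : ℤ)) (fun _ => (n : ℤ))

/-- The conclusion of the mixing lemma: `F` vanishes outside `[0,m) × [1,n]^{d-1}`, is
bounded by `M`, has inputs `f_in` on `{0} × {1,…,n}^{d-1}` and outputs `f_out` on
`{m-1} × {1,…,n}^{d-1}` (in the direction `e₁`), and satisfies the node law at every
vertex outside `({0} ∪ {m}) × {1,…,n}^{d-1}`. -/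
def mixProp (d₀ : ℕ) (M : ℝ) (n m : ℕ) (fin fout : (Fin d₀ → ℤ) → ℝ)
    (F : Streamm (d₀ + 1)) : Prop :=
  (∀ e : Edge (d₀ + 1),
    ¬(0 ≤ e.1 0 ∧ e.1 0 < (m : ℤ) ∧ ∀ k : Fin d₀, 1 ≤ e.1 k.succ ∧ e.1 k.succ ≤ (n : ℤ)) →
    F e = 0) ∧
  (∀ e : Edge (d₀ + 1), |F e| ≤ M) ∧
  (∀ y : Fin d₀ → ℤ, (∀ k, 1 ≤ y k ∧ y k ≤ (n : ℤ)) →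
    F (Fin.cons 0 y, 0) = fin y ∧ F (Fin.cons ((m : ℤ) - 1) y, 0) = fout y) ∧
  (∀ z : Fin (d₀ + 1) → ℤ,
    ¬(z 0 = 0 ∧ ∀ k : Fin d₀, 1 ≤ z k.succ ∧ z k.succ ≤ (n : ℤ)) →
    ¬(z 0 = (m : ℤ) ∧ ∀ k : Fin d₀, 1 ≤ z k.succ ∧ z k.succ ≤ (n : ℤ)) →
    nodeLaw F z)


variable {d₀ : ℕ}

lemma mem_boxIdx {n : ℕ} {y : Fin d₀ → ℤ} :
    y ∈ boxIdx d₀ n ↔ ∀ k, 1 ≤ y k ∧ y k ≤ (n : ℤ) := by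
  simp [boxIdx, Finset.mem_Icc, Pi.le_def, forall_and]

/-- average of `h` over the `k`-th coordinate -/

noncomputable def avgc (n : ℕ) (k : Fin d₀) (h : (Fin d₀ → ℤ) → ℝ) (y : Fin d₀ → ℤ) : ℝ :=
  (∑ j ∈ Finset.Icc (1:ℤ) (n:ℤ), h (Function.update y k j)) / (n : ℝ)

lemma update_mem_box {n : ℕ} {y : Fin d₀ → ℤ} (hy : ∀ k, 1 ≤ y k ∧ y k ≤ (n:ℤ))
    (k : Fin d₀) {j : ℤ} (hj : 1 ≤ j ∧ j ≤ (n:ℤ)) :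
    ∀ i, 1 ≤ Function.update y k j i ∧ Function.update y k j i ≤ (n:ℤ) := by
  intro i
  rcases eq_or_ne i k with rfl | hik
  · simpa using hj
  · simpa [Function.update_of_ne hik] using hy i

lemma card_Icc_int (n : ℕ) : (Finset.Icc (1:ℤ) (n:ℤ)).card = n := by
  rw [Int.card_Icc]; omega

lemma avgc_bound {n : ℕ} (hn : 1 ≤ n) {M : ℝ} (k : Fin d₀) {h : (Fin d₀ → ℤ) → ℝ}
    (hb : ∀ y, (∀ i, 1 ≤ y i ∧ y i ≤ (n:ℤ)) → |h y| ≤ M)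
    {y : Fin d₀ → ℤ} (hy : ∀ i, 1 ≤ y i ∧ y i ≤ (n:ℤ)) : |avgc n k h y| ≤ M := by
  have hM : 0 ≤ M := le_trans (abs_nonneg _) (hb y hy)
  have h1 : |∑ j ∈ Finset.Icc (1:ℤ) (n:ℤ), h (Function.update y k j)| ≤ (n:ℝ) * M := by
    calc |∑ j ∈ Finset.Icc (1:ℤ) (n:ℤ), h (Function.update y k j)|
        ≤ ∑ j ∈ Finset.Icc (1:ℤ) (n:ℤ), |h (Function.update y k j)| :=
          Finset.abs_sum_le_sum_abs _ _
      _ ≤ ∑ j ∈ Finset.Icc (1:ℤ) (n:ℤ), M := by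
          apply Finset.sum_le_sum
          intro j hj
          exact hb _ (update_mem_box hy k (by simpa [Finset.mem_Icc] using hj))
      _ = (n:ℝ) * M := by rw [Finset.sum_const, card_Icc_int]; simp
  rw [avgc, abs_div]
  rw [abs_of_nonneg (by positivity : (0:ℝ) ≤ (n:ℝ))]
  rw [div_le_iff₀ (by positivity)]
  linarith [h1]

lemma avgc_update (n : ℕ) (k : Fin d₀) (h : (Fin d₀ → ℤ) → ℝ) (y : Fin d₀ → ℤ) (v : ℤ) :
    avgc n k h (Function.update y k v) = avgc n k h y := by
  unfold avgc
  congr 1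
  apply Finset.sum_congr rfl
  intro j _
  rw [Function.update_idem]

lemma avgc_line_sum (n : ℕ) (hn : 1 ≤ n) (k : Fin d₀) (h : (Fin d₀ → ℤ) → ℝ) (y : Fin d₀ → ℤ) :
    ∑ l ∈ Finset.Icc (1:ℤ) (n:ℤ), avgc n k h (Function.update y k l)
      = ∑ l ∈ Finset.Icc (1:ℤ) (n:ℤ), h (Function.update y k l) := by
  have : ∀ l ∈ Finset.Icc (1:ℤ) (n:ℤ), avgc n k h (Function.update y k l) = avgc n k h y :=
    fun l _ => avgc_update n k h y l
  rw [Finset.sum_congr rfl this, Finset.sum_const, card_Icc_int, avgc, nsmul_eq_mul]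
  field_simp

lemma avgc_box_sum (n : ℕ) (hn : 1 ≤ n) (k : Fin d₀) (h : (Fin d₀ → ℤ) → ℝ) :
    ∑ z ∈ boxIdx d₀ n, avgc n k h z = ∑ z ∈ boxIdx d₀ n, h z := by
  have key : ∑ p ∈ (boxIdx d₀ n) ×ˢ Finset.Icc (1:ℤ) (n:ℤ), h (Function.update p.1 k p.2)
      = ∑ p ∈ (boxIdx d₀ n) ×ˢ Finset.Icc (1:ℤ) (n:ℤ), h p.1 := by
    apply Finset.sum_nbij' (i := fun p => (Function.update p.1 k p.2, p.1 k))
      (j := fun p => (Function.update p.1 k p.2, p.1 k))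
    · intro p hp
      rw [Finset.mem_product] at hp ⊢
      refine ⟨mem_boxIdx.2 (update_mem_box (mem_boxIdx.1 hp.1) k
        (by simpa [Finset.mem_Icc] using hp.2)), ?_⟩
      simpa [Finset.mem_Icc] using (mem_boxIdx.1 hp.1) k
    · intro p hp
      rw [Finset.mem_product] at hp ⊢
      refine ⟨mem_boxIdx.2 (update_mem_box (mem_boxIdx.1 hp.1) k
        (by simpa [Finset.mem_Icc] using hp.2)), ?_⟩
      simpa [Finset.mem_Icc] using (mem_boxIdx.1 hp.1) k
    · intro p hp
      simp [Function.update_idem, Function.update_eq_self]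
    · intro p hp
      simp [Function.update_idem, Function.update_eq_self]
    · intro p hp
      simp [Function.update_idem]
  have expand : ∀ z, avgc n k h z
      = ∑ j ∈ Finset.Icc (1:ℤ) (n:ℤ), h (Function.update z k j) / (n:ℝ) := by
    intro z; rw [avgc, Finset.sum_div]
  calc ∑ z ∈ boxIdx d₀ n, avgc n k h z
      = ∑ p ∈ (boxIdx d₀ n) ×ˢ Finset.Icc (1:ℤ) (n:ℤ), h (Function.update p.1 k p.2) / (n:ℝ) := by
        rw [Finset.sum_product]
        exact Finset.sum_congr rfl fun z _ => expand z
    _ = (∑ p ∈ (boxIdx d₀ n) ×ˢ Finset.Icc (1:ℤ) (n:ℤ), h (Function.update p.1 k p.2)) / (n:ℝ) := by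
        rw [Finset.sum_div]
    _ = (∑ p ∈ (boxIdx d₀ n) ×ˢ Finset.Icc (1:ℤ) (n:ℤ), h p.1) / (n:ℝ) := by rw [key]
    _ = ∑ z ∈ boxIdx d₀ n, h z := by
        rw [Finset.sum_product]
        have : ∀ z ∈ boxIdx d₀ n, ∑ _j ∈ Finset.Icc (1:ℤ) (n:ℤ), h z = (n:ℝ) * h z := by
          intro z _; rw [Finset.sum_const, card_Icc_int, nsmul_eq_mul]
        rw [Finset.sum_congr rfl this, ← Finset.mul_sum]
        field_simp


noncomputable def itA (n : ℕ) (h : (Fin d₀ → ℤ) → ℝ) : ℕ → (Fin d₀ → ℤ) → ℝ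
  | 0 => h
  | k+1 => if hk : k < d₀ then avgc n ⟨k, hk⟩ (itA n h k) else itA n h k

lemma itA_bound {n : ℕ} (hn : 1 ≤ n) {M : ℝ} {h : (Fin d₀ → ℤ) → ℝ}
    (hb : ∀ y, (∀ i, 1 ≤ y i ∧ y i ≤ (n:ℤ)) → |h y| ≤ M) (k : ℕ) :
    ∀ y, (∀ i, 1 ≤ y i ∧ y i ≤ (n:ℤ)) → |itA n h k y| ≤ M := by
  induction k with
  | zero => exact hb
  | succ k ih =>
    intro y hy
    rw [itA]
    split
    · exact avgc_bound hn _ ih hy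
    · exact ih y hy

lemma itA_succ (n : ℕ) (h : (Fin d₀ → ℤ) → ℝ) (k : ℕ) :
    itA n h (k+1) = if hk : k < d₀ then avgc n ⟨k, hk⟩ (itA n h k) else itA n h k := rfl

lemma itA_box_sum' {n : ℕ} (hn : 1 ≤ n) (h : (Fin d₀ → ℤ) → ℝ) (k : ℕ) :
    ∑ z ∈ boxIdx d₀ n, itA n h k z = ∑ z ∈ boxIdx d₀ n, h z := by
  induction k with
  | zero => rfl
  | succ k ih =>
    rw [itA_succ]
    split
    · rw [avgc_box_sum n hn _ _, ih]
    · exact ih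

lemma itA_update {n : ℕ} (h : (Fin d₀ → ℤ) → ℝ) (k : ℕ) (j : Fin d₀) (hj : (j:ℕ) < k)
    (y : Fin d₀ → ℤ) (v : ℤ) : itA n h k (Function.update y j v) = itA n h k y := by
  induction k generalizing y with
  | zero => omega
  | succ k ih =>
    rw [itA_succ]
    split
    · rename_i hk
      rcases eq_or_lt_of_le (Nat.lt_succ_iff.1 hj) with hjk | hjk
      · have hj' : j = ⟨k, hk⟩ := Fin.ext hjk
        rw [hj']
        exact avgc_update n _ (itA n h k) y v
      · have hne : j ≠ ⟨k, hk⟩ := by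
          intro hh; rw [hh] at hjk; simp at hjk
        unfold avgc
        congr 1
        apply Finset.sum_congr rfl
        intro l _
        rw [Function.update_comm hne, ih hjk]
    · rename_i hk
      exact ih (lt_of_lt_of_le j.isLt (by omega)) y

lemma const_of_update {N : ℕ} (g : (Fin N → ℤ) → ℝ)
    (hg : ∀ (y : Fin N → ℤ) (j : Fin N) (v : ℤ), g (Function.update y j v) = g y)
    (y y' : Fin N → ℤ) : g y = g y' := by
  have key : ∀ s : Finset (Fin N), g (fun i => if i ∈ s then y' i else y i) = g y := by
    intro s
    induction s using Finset.induction with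
    | empty => simp
    | @insert a s _ ih =>
      have heq : (fun i => if i ∈ insert a s then y' i else y i)
          = Function.update (fun i => if i ∈ s then y' i else y i) a (y' a) := by
        funext i
        rcases eq_or_ne i a with rfl | hia
        · simp [Function.update_self]
        · simp [Function.update_of_ne hia, hia]
      rw [heq, hg, ih]
  have := key Finset.univ
  simp only [Finset.mem_univ, if_true] at this
  exact this.symm

lemma itA_top_update {n : ℕ} (h : (Fin d₀ → ℤ) → ℝ) (y : Fin d₀ → ℤ) (j : Fin d₀) (v : ℤ) :
    itA n h d₀ (Function.update y j v) = itA n h d₀ y :=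
  itA_update h d₀ j j.isLt y v

lemma card_boxIdx (n : ℕ) : (boxIdx d₀ n).card = n ^ d₀ := by
  rw [boxIdx, Pi.card_Icc]
  simp [Int.card_Icc]

lemma itA_top {n : ℕ} (hn : 1 ≤ n) (h : (Fin d₀ → ℤ) → ℝ) (y : Fin d₀ → ℤ) :
    itA n h d₀ y = (∑ z ∈ boxIdx d₀ n, h z) / (n:ℝ)^d₀ := by
  have hconst : ∀ z, itA n h d₀ z = itA n h d₀ y := fun z =>
    const_of_update (itA n h d₀) (fun y j v => itA_top_update h y j v) z y
  have hs : ∑ z ∈ boxIdx d₀ n, itA n h d₀ z = (n:ℝ)^d₀ * itA n h d₀ y := by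
    rw [Finset.sum_congr rfl (fun z _ => hconst z), Finset.sum_const, card_boxIdx,
      nsmul_eq_mul]
    push_cast
    ring
  rw [itA_box_sum' hn h d₀] at hs
  have hn' : ((n:ℝ))^d₀ ≠ 0 := by positivity
  rw [eq_div_iff hn']
  linarith [hs]

lemma itA_ge {n : ℕ} (h : (Fin d₀ → ℤ) → ℝ) (k : ℕ) (hk : d₀ ≤ k) :
    itA n h k = itA n h d₀ := by
  induction k with
  | zero => have : d₀ = 0 := by omega
            subst this
            rfl
  | succ k ih =>
    rcases eq_or_lt_of_le hk with hk' | hk'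
    · rw [← hk']
    · have hdk : d₀ ≤ k := by omega
      rw [itA_succ, dif_neg (by omega), ih hdk]

lemma itA_n1 {h : (Fin d₀ → ℤ) → ℝ} {y : Fin d₀ → ℤ} (hy : ∀ i, 1 ≤ y i ∧ y i ≤ (1:ℤ))
    (k : ℕ) : itA 1 h k y = h y := by
  induction k with
  | zero => rfl
  | succ k ih =>
    rw [itA_succ]
    split
    · rename_i hk
      rw [avgc]
      have : Finset.Icc (1:ℤ) ((1:ℕ):ℤ) = {1} := by norm_num
      rw [this, Finset.sum_singleton]
      have hy1 : y ⟨k, hk⟩ = 1 := le_antisymm ((hy _).2) ((hy _).1)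
      rw [← hy1, Function.update_eq_self]
      simpa using ih
    · exact ih


noncomputable def prof (n : ℕ) (h : (Fin d₀ → ℤ) → ℝ) (t : ℕ) (y : Fin d₀ → ℤ) : ℝ :=
  itA n h (t / (n-1)) y + ((t % (n-1) : ℕ) : ℝ) / ((n-1 : ℕ) : ℝ) *
    (itA n h (t / (n-1) + 1) y - itA n h (t / (n-1)) y)

lemma prof_zero (n : ℕ) (h : (Fin d₀ → ℤ) → ℝ) (y : Fin d₀ → ℤ) : prof n h 0 y = h y := by
  simp [prof, Nat.zero_div, Nat.zero_mod, itA]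

lemma prof_end {n : ℕ} (hn : 1 ≤ n) (h : (Fin d₀ → ℤ) → ℝ) {t : ℕ} (ht : d₀ * (n-1) ≤ t)
    {y : Fin d₀ → ℤ} (hy : ∀ i, 1 ≤ y i ∧ y i ≤ (n:ℤ)) : prof n h t y = itA n h d₀ y := by
  rcases Nat.lt_or_ge n 2 with h2 | h2
  · -- n = 1
    have hn1 : n = 1 := by omega
    subst hn1
    have : (1:ℕ) - 1 = 0 := rfl
    rw [prof, this]
    simp only [Nat.div_zero, Nat.mod_zero, Nat.cast_zero, div_zero, zero_mul, add_zero]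
    rw [show itA 1 h 0 y = h y from rfl, itA_n1 hy]
  · have hL : 0 < n - 1 := by omega
    have hdiv : d₀ ≤ t / (n-1) := (Nat.le_div_iff_mul_le hL).2 ht
    rw [prof, itA_ge h (t/(n-1)) hdiv, itA_ge h (t/(n-1)+1) (by omega)]
    ring

lemma prof_bound {n : ℕ} (hn : 1 ≤ n) {M : ℝ} (hM : 0 ≤ M) {h : (Fin d₀ → ℤ) → ℝ}
    (hb : ∀ y, (∀ i, 1 ≤ y i ∧ y i ≤ (n:ℤ)) → |h y| ≤ M) (t : ℕ)
    {y : Fin d₀ → ℤ} (hy : ∀ i, 1 ≤ y i ∧ y i ≤ (n:ℤ)) : |prof n h t y| ≤ M := by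
  set L := n - 1 with hLdef
  set c : ℝ := ((t % L : ℕ) : ℝ) / ((L:ℕ) : ℝ) with hc
  have hc0 : 0 ≤ c := by positivity
  have hc1 : c ≤ 1 := by
    rcases Nat.eq_zero_or_pos L with h0 | hpos
    · simp [hc, h0]
    · rw [hc, div_le_one (by exact_mod_cast hpos)]
      exact_mod_cast le_of_lt (Nat.mod_lt _ hpos)
  have e1 := itA_bound hn hb (t / L) y hy
  have e2 := itA_bound hn hb (t / L + 1) y hy
  have : prof n h t y = (1 - c) * itA n h (t / L) y + c * itA n h (t / L + 1) y := by
    rw [prof]; ring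
  rw [this]
  calc |(1 - c) * itA n h (t / L) y + c * itA n h (t / L + 1) y|
      ≤ (1-c) * |itA n h (t / L) y| + c * |itA n h (t / L + 1) y| := by
        refine le_trans (abs_add_le _ _) ?_
        rw [abs_mul, abs_mul, abs_of_nonneg (by linarith), abs_of_nonneg hc0]
    _ ≤ (1-c) * M + c * M := by
        have := abs_nonneg (itA n h (t / L) y)
        nlinarith
    _ = M := by ring

/-- key telescoping: the increment of the profile -/

lemma prof_succ_sub (n : ℕ) (h : (Fin d₀ → ℤ) → ℝ) (s : ℕ) (hs : 1 ≤ s) (y : Fin d₀ → ℤ) :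
    prof n h s y - prof n h (s-1) y
      = (1 / ((n-1 : ℕ) : ℝ)) *
        (itA n h ((s-1) / (n-1) + 1) y - itA n h ((s-1) / (n-1)) y) := by
  set L := n - 1 with hLdef
  rcases Nat.eq_zero_or_pos L with h0 | hL
  · rw [h0]
    simp [prof, ← hLdef, h0]
  · have hk : ∃ k r, (s-1) / L = k ∧ (s-1) % L = r := ⟨_, _, rfl, rfl⟩
    obtain ⟨k, r, hk, hr⟩ := hk
    have hrL : r < L := hr ▸ Nat.mod_lt _ hL
    have hkr : s - 1 = L * k + r := by
      have h2 := Nat.div_add_mod (s-1) L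
      rw [hk, hr] at h2
      omega
    have hL0 : ((L:ℕ):ℝ) ≠ 0 := by
      have : (0:ℝ) < (L:ℝ) := by exact_mod_cast hL
      linarith
    rcases Nat.lt_or_ge (r+1) L with hcase | hcase
    · -- stay within the block
      have hsdiv : s / L = k := by
        have h1 : s = (r+1) + L * k := by omega
        rw [h1, Nat.add_mul_div_left _ _ hL, Nat.div_eq_of_lt hcase]
        omega
      have hsmod : s % L = r + 1 := by
        have h1 : s = (r+1) + L * k := by omega
        rw [h1, Nat.add_mul_mod_self_left, Nat.mod_eq_of_lt hcase]
      rw [prof, prof, hsdiv, hsmod, hk, hr]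
      have : ((r+1 : ℕ) : ℝ) = (r:ℝ) + 1 := by push_cast; ring
      rw [this]
      rw [← hLdef]
      field_simp
      ring
    · -- cross into the next block
      have hrL1 : r + 1 = L := by omega
      have hsL : s = L * (k+1) := by
        have : L*(k+1) = L*k + L := by ring
        omega
      have hsdiv : s / L = k + 1 := by rw [hsL, Nat.mul_div_cancel_left _ hL]
      have hsmod : s % L = 0 := by rw [hsL]; exact Nat.mul_mod_right _ _
      rw [prof, prof, hsdiv, hsmod, hk, hr]
      have hrcast : ((r : ℕ) : ℝ) = ((L:ℕ):ℝ) - 1 := by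
        rw [← hrL1]
        push_cast
        ring
      rw [hrcast]
      simp only [Nat.cast_zero, zero_div, zero_mul, add_zero]
      rw [← hLdef]
      field_simp
      ring


lemma consec_nonneg (j : ℤ) : 0 ≤ j * (j - 1) := by
  rcases le_or_gt 1 j with hj | hj
  · nlinarith
  · nlinarith

lemma quad_ineq {i n : ℤ} (h0 : 0 ≤ i) (h1 : i ≤ n) : 2*i*(n-i) ≤ n*(n-1) := by
  nlinarith [consec_nonneg i, consec_nonneg (n - i)]

lemma trans_sum_bound {n : ℕ} (hn : 1 ≤ n) {M : ℝ} (hM : 0 ≤ M) (k : Fin d₀)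
    {g : (Fin d₀ → ℤ) → ℝ} (hb : ∀ y, (∀ i, 1 ≤ y i ∧ y i ≤ (n:ℤ)) → |g y| ≤ M)
    {y : Fin d₀ → ℤ} (hother : ∀ j, j ≠ k → 1 ≤ y j ∧ y j ≤ (n:ℤ))
    (hi0 : 0 ≤ y k) (hi1 : y k ≤ (n:ℤ)) :
    |∑ l ∈ Finset.Icc (1:ℤ) (y k),
        (avgc n k g (Function.update y k l) - g (Function.update y k l))|
      ≤ ((n-1:ℕ):ℝ) * M := by
  set i : ℤ := y k with hidef
  have hupd : ∀ l : ℤ, 1 ≤ l → l ≤ (n:ℤ) →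
      ∀ j, 1 ≤ Function.update y k l j ∧ Function.update y k l j ≤ (n:ℤ) := by
    intro l hl1 hl2 j
    rcases eq_or_ne j k with rfl | hj
    · simp [hl1, hl2]
    · simpa [Function.update_of_ne hj] using hother j hj
  -- cardinalities
  have hcard1 : (Finset.Icc (1:ℤ) i).card = i.toNat := by rw [Int.card_Icc]; omega
  have hcard2 : (Finset.Icc (i+1) (n:ℤ)).card = ((n:ℤ) - i).toNat := by rw [Int.card_Icc]; omega
  -- split Icc 1 n
  have hsplit : Finset.Icc (1:ℤ) (n:ℤ) = Finset.Icc 1 i ∪ Finset.Icc (i+1) (n:ℤ) := by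
    ext x; simp only [Finset.mem_Icc, Finset.mem_union]; omega
  set S : ℝ := ∑ l ∈ Finset.Icc (1:ℤ) i, g (Function.update y k l) with hS
  set R : ℝ := ∑ l ∈ Finset.Icc (i+1) (n:ℤ), g (Function.update y k l) with hR
  have hTn : ∑ l ∈ Finset.Icc (1:ℤ) (n:ℤ), g (Function.update y k l) = S + R := by
    rw [hsplit, Finset.sum_union]
    rw [Finset.disjoint_left]
    intro a ha hb'
    simp [Finset.mem_Icc] at ha hb'
    omega
  have havg : ∀ l, avgc n k g (Function.update y k l) = (S + R) / (n:ℝ) := by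
    intro l
    rw [avgc_update, avgc, hTn]
  -- LHS computation
  have hlhs : ∑ l ∈ Finset.Icc (1:ℤ) i,
      (avgc n k g (Function.update y k l) - g (Function.update y k l))
      = (i:ℝ) * ((S+R)/(n:ℝ)) - S := by
    rw [Finset.sum_sub_distrib]
    congr 1
    rw [Finset.sum_congr rfl (fun l _ => havg l), Finset.sum_const, hcard1, nsmul_eq_mul]
    congr 1
    exact_mod_cast Int.toNat_of_nonneg hi0
  rw [hlhs]
  -- bounds on S and R
  have hSb : |S| ≤ (i:ℝ) * M := by
    calc |S| ≤ ∑ l ∈ Finset.Icc (1:ℤ) i, |g (Function.update y k l)| :=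
        Finset.abs_sum_le_sum_abs _ _
      _ ≤ ∑ l ∈ Finset.Icc (1:ℤ) i, M := by
          apply Finset.sum_le_sum
          intro l hl
          simp only [Finset.mem_Icc] at hl
          exact hb _ (hupd l hl.1 (le_trans hl.2 hi1))
      _ = (i:ℝ) * M := by
          rw [Finset.sum_const, hcard1, nsmul_eq_mul]
          congr 1
          exact_mod_cast Int.toNat_of_nonneg hi0
  have hRb : |R| ≤ ((n:ℝ) - (i:ℝ)) * M := by
    calc |R| ≤ ∑ l ∈ Finset.Icc (i+1) (n:ℤ), |g (Function.update y k l)| :=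
        Finset.abs_sum_le_sum_abs _ _
      _ ≤ ∑ l ∈ Finset.Icc (i+1) (n:ℤ), M := by
          apply Finset.sum_le_sum
          intro l hl
          simp only [Finset.mem_Icc] at hl
          exact hb _ (hupd l (by omega) hl.2)
      _ = ((n:ℝ) - (i:ℝ)) * M := by
          rw [Finset.sum_const, hcard2, nsmul_eq_mul]
          congr 1
          have : (((n:ℤ) - i).toNat : ℤ) = (n:ℤ) - i := Int.toNat_of_nonneg (by omega)
          exact_mod_cast this
  -- arithmetic
  have hn0 : (0:ℝ) < (n:ℝ) := by exact_mod_cast hn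
  have hiR0 : (0:ℝ) ≤ (i:ℝ) := by exact_mod_cast hi0
  have hiR1 : (i:ℝ) ≤ (n:ℝ) := by exact_mod_cast hi1
  have key : 2*(i:ℝ)*((n:ℝ)-(i:ℝ)) ≤ (n:ℝ)*((n:ℝ)-1) := by
    exact_mod_cast quad_ineq hi0 hi1
  have hq : (i:ℝ) * ((S+R)/(n:ℝ)) - S = (((i:ℝ) - (n:ℝ)) * S + (i:ℝ) * R) / (n:ℝ) := by
    field_simp
    ring
  rw [hq, abs_div, abs_of_pos hn0, div_le_iff₀ hn0]
  have h1 : |((i:ℝ) - (n:ℝ)) * S + (i:ℝ) * R| ≤ ((n:ℝ)-(i:ℝ)) * |S| + (i:ℝ) * |R| := by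
    calc |((i:ℝ) - (n:ℝ)) * S + (i:ℝ) * R| ≤ |((i:ℝ)-(n:ℝ)) * S| + |(i:ℝ) * R| := abs_add_le _ _
      _ = ((n:ℝ)-(i:ℝ)) * |S| + (i:ℝ) * |R| := by
          rw [abs_mul, abs_mul, abs_of_nonneg hiR0, abs_of_nonpos (by linarith : (i:ℝ)-(n:ℝ) ≤ 0)]
          ring_nf
  have hLcast : (((n-1:ℕ)):ℝ) = (n:ℝ) - 1 := by
    have : ((n-1:ℕ):ℤ) = (n:ℤ) - 1 := by omega
    exact_mod_cast this
  rw [hLcast]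
  have hs0 : 0 ≤ |S| := abs_nonneg _
  have hr0 : 0 ≤ |R| := abs_nonneg _
  nlinarith [h1, hSb, hRb]



noncomputable def mixG (n : ℕ) (f g : (Fin d₀ → ℤ) → ℝ) (m c t : ℤ) (y : Fin d₀ → ℤ) : ℝ :=
  if t < c then prof n f t.toNat y else prof n g (m - 1 - t).toNat y

def mixDir (n : ℕ) (m c t : ℤ) : ℕ :=
  if t < c then (t - 1).toNat / (n-1) else (m - 1 - t).toNat / (n-1)

noncomputable def mixT (n : ℕ) (f g : (Fin d₀ → ℤ) → ℝ) (m c t : ℤ)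
    (y : Fin d₀ → ℤ) (k : Fin d₀) : ℝ :=
  ∑ l ∈ Finset.Icc (1:ℤ) (y k),
    (mixG n f g m c (t-1) (Function.update y k l) - mixG n f g m c t (Function.update y k l))

noncomputable def mixF (d₀ n : ℕ) (f g : (Fin d₀ → ℤ) → ℝ) (m c : ℤ) : Streamm (d₀+1) :=
  fun e =>
    if 0 ≤ e.1 0 ∧ e.1 0 < m ∧ (∀ k : Fin d₀, 1 ≤ e.1 k.succ ∧ e.1 k.succ ≤ (n:ℤ)) then
      Fin.cases (mixG n f g m c (e.1 0) (fun j => e.1 j.succ))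
        (fun k => if (k : ℕ) = mixDir n m c (e.1 0)
          then mixT n f g m c (e.1 0) (fun j => e.1 j.succ) k else 0) e.2
    else 0

lemma mixF_zero {n : ℕ} (f g : (Fin d₀ → ℤ) → ℝ) (m c : ℤ) (z : Fin (d₀+1) → ℤ) :
    mixF d₀ n f g m c (z, 0) =
      if 0 ≤ z 0 ∧ z 0 < m ∧ (∀ k : Fin d₀, 1 ≤ z k.succ ∧ z k.succ ≤ (n:ℤ))
      then mixG n f g m c (z 0) (fun j => z j.succ) else 0 := by
  rw [mixF]
  split_ifs <;> simp

lemma mixF_succ {n : ℕ} (f g : (Fin d₀ → ℤ) → ℝ) (m c : ℤ) (z : Fin (d₀+1) → ℤ)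
    (k : Fin d₀) :
    mixF d₀ n f g m c (z, k.succ) =
      if (0 ≤ z 0 ∧ z 0 < m ∧ (∀ j : Fin d₀, 1 ≤ z j.succ ∧ z j.succ ≤ (n:ℤ)))
          ∧ (k : ℕ) = mixDir n m c (z 0)
      then mixT n f g m c (z 0) (fun j => z j.succ) k else 0 := by
  rw [mixF]
  by_cases h1 : 0 ≤ z 0 ∧ z 0 < m ∧ (∀ j : Fin d₀, 1 ≤ z j.succ ∧ z j.succ ≤ (n:ℤ))
  · rw [if_pos h1]
    simp only [Fin.cases_succ]
    by_cases h2 : (k : ℕ) = mixDir n m c (z 0)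
    · rw [if_pos h2, if_pos ⟨h1, h2⟩]
    · rw [if_neg h2, if_neg (fun hc => h2 hc.2)]
  · rw [if_neg h1, if_neg (fun hc => h1 hc.1)]

lemma line_sum_diff_zero {n : ℕ} (hn : 1 ≤ n) (k : Fin d₀) (g : (Fin d₀ → ℤ) → ℝ)
    (y : Fin d₀ → ℤ) :
    ∑ l ∈ Finset.Icc (1:ℤ) (n:ℤ),
      (avgc n k g (Function.update y k l) - g (Function.update y k l)) = 0 := by
  rw [Finset.sum_sub_distrib, avgc_line_sum n hn k g y]
  ring

lemma mixT_diff (n : ℕ) (f g : (Fin d₀ → ℤ) → ℝ) (m c t : ℤ) (y : Fin d₀ → ℤ)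
    (k : Fin d₀) (h1 : 1 ≤ y k) :
    mixT n f g m c t y k - mixT n f g m c t (Function.update y k (y k - 1)) k
      = mixG n f g m c (t-1) y - mixG n f g m c t y := by
  rw [mixT, mixT, Function.update_self]
  have hupd : ∀ l : ℤ, Function.update (Function.update y k (y k - 1)) k l
      = Function.update y k l := fun l => Function.update_idem ..
  have h2 : ∑ l ∈ Finset.Icc (1:ℤ) (y k - 1),
      (mixG n f g m c (t-1) (Function.update (Function.update y k (y k - 1)) k l)
        - mixG n f g m c t (Function.update (Function.update y k (y k - 1)) k l))
      = ∑ l ∈ Finset.Icc (1:ℤ) (y k - 1),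
      (mixG n f g m c (t-1) (Function.update y k l)
        - mixG n f g m c t (Function.update y k l)) :=
    Finset.sum_congr rfl (fun l _ => by rw [hupd l])
  rw [h2]
  have hsplit : Finset.Icc (1:ℤ) (y k) = insert (y k) (Finset.Icc 1 (y k - 1)) := by
    ext x
    simp only [Finset.mem_insert, Finset.mem_Icc]
    omega
  rw [hsplit, Finset.sum_insert (by intro hmem; simp only [Finset.mem_Icc] at hmem; omega)]
  simp only [Function.update_eq_self]
  ring

theorem mix_main (d₀ : ℕ) (hd : 1 ≤ d₀) (M : ℝ) (hM : 0 < M) (n : ℕ) (hn : 1 ≤ n)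
    (fin fout : (Fin d₀ → ℤ) → ℝ)
    (hfin : ∀ y : Fin d₀ → ℤ, (∀ k, 1 ≤ y k ∧ y k ≤ (n : ℤ)) → |fin y| ≤ M)
    (hfout : ∀ y : Fin d₀ → ℤ, (∀ k, 1 ≤ y k ∧ y k ≤ (n : ℤ)) → |fout y| ≤ M)
    (hsum : ∑ y ∈ boxIdx d₀ n, fin y = ∑ y ∈ boxIdx d₀ n, fout y)
    (m : ℕ) (hm : 1 ≤ m) (c : ℤ)
    (hc1 : ((d₀ * (n-1) : ℕ) : ℤ) + 1 ≤ c)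
    (hc2 : c ≤ (m:ℤ) - 1 → ((d₀ * (n-1) : ℕ) : ℤ) ≤ (m:ℤ) - 1 - c)
    (hlast : ∀ y : Fin d₀ → ℤ, (∀ k, 1 ≤ y k ∧ y k ≤ (n : ℤ)) →
      mixG n fin fout (m:ℤ) c ((m:ℤ)-1) y = fout y) :
    mixProp d₀ M n m fin fout (mixF d₀ n fin fout (m:ℤ) c) := by
  classical
  have hM0 : (0:ℝ) ≤ M := le_of_lt hM
  -- increments of the profile along the tube
  have hincr : ∀ t : ℤ, 1 ≤ t → t ≤ (m:ℤ) - 1 →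
      (∀ y : Fin d₀ → ℤ, (∀ k, 1 ≤ y k ∧ y k ≤ (n:ℤ)) →
        mixG n fin fout (m:ℤ) c (t-1) y - mixG n fin fout (m:ℤ) c t y = 0) ∨
      (∃ h : (Fin d₀ → ℤ) → ℝ, ∃ ε : ℝ,
        (∀ y : Fin d₀ → ℤ, (∀ k, 1 ≤ y k ∧ y k ≤ (n:ℤ)) → |h y| ≤ M) ∧ (ε = 1 ∨ ε = -1) ∧
        ∀ y : Fin d₀ → ℤ, mixG n fin fout (m:ℤ) c (t-1) y - mixG n fin fout (m:ℤ) c t y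
          = ε * ((1/((n-1:ℕ):ℝ)) *
              (itA n h (mixDir n (m:ℤ) c t + 1) y - itA n h (mixDir n (m:ℤ) c t) y))) := by
    intro t ht1 ht2
    rcases lt_trichotomy t c with hlt | heq | hgt
    · right
      refine ⟨fin, -1, hfin, Or.inr rfl, ?_⟩
      intro y
      rw [mixG, if_pos (show t - 1 < c by omega), mixG, if_pos hlt, mixDir, if_pos hlt]
      have hts : (t-1).toNat = t.toNat - 1 := by omega
      rw [hts]
      have key := prof_succ_sub n fin t.toNat (by omega) y
      linarith [key]
    · left
      intro y hy
      have e1 : mixG n fin fout (m:ℤ) c (t-1) y = prof n fin (t-1).toNat y := by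
        rw [mixG, if_pos (by omega)]
      have e2 : mixG n fin fout (m:ℤ) c t y = prof n fout ((m:ℤ)-1-t).toNat y := by
        rw [mixG, if_neg (by omega)]
      have f1 : prof n fin (t-1).toNat y = itA n fin d₀ y :=
        prof_end hn fin (by omega) hy
      have f2 : prof n fout ((m:ℤ)-1-t).toNat y = itA n fout d₀ y := by
        have hc2' := hc2 (by omega)
        exact prof_end hn fout (by omega) hy
      rw [e1, e2, f1, f2, itA_top hn fin y, itA_top hn fout y, hsum]
      ring
    · right
      refine ⟨fout, 1, hfout, Or.inl rfl, ?_⟩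
      intro y
      rw [mixG, if_neg (by omega), mixG, if_neg (by omega), mixDir, if_neg (by omega)]
      have h1 : ((m:ℤ) - 1 - (t-1)).toNat = ((m:ℤ)-1-t).toNat + 1 := by omega
      rw [h1]
      have key := prof_succ_sub n fout (((m:ℤ)-1-t).toNat + 1) (by omega) y
      simp only [Nat.add_sub_cancel] at key
      linarith [key]
  -- no increment at nonpositive columns
  have hcol0 : ∀ t : ℤ, t ≤ 0 → ∀ y : Fin d₀ → ℤ,
      mixG n fin fout (m:ℤ) c (t-1) y - mixG n fin fout (m:ℤ) c t y = 0 := by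
    intro t ht y
    rw [mixG, if_pos (by omega), mixG, if_pos (by omega)]
    have h1 : (t-1).toNat = t.toNat := by omega
    rw [h1]
    ring
  refine ⟨?_, ?_, ?_, ?_⟩
  · -- (i) vanishing outside the tube
    intro e hne
    rw [mixF, if_neg hne]
  · -- (ii) boundedness
    rintro ⟨z, i⟩
    induction i using Fin.cases with
    | zero =>
      rw [mixF_zero]
      split_ifs with hg
      · rw [mixG]
        split_ifs
        · exact prof_bound hn hM0 hfin _ (fun k => hg.2.2 k)
        · exact prof_bound hn hM0 hfout _ (fun k => hg.2.2 k)
      · simpa using hM0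
    | succ k =>
      rw [mixF_succ]
      split_ifs with hg
      · obtain ⟨⟨hg0, hgm, hgb⟩, hdir⟩ := hg
        rcases eq_or_lt_of_le hg0 with ht0 | ht1
        · have hz : mixT n fin fout (m:ℤ) c (z 0) (fun j => z j.succ) k = 0 := by
            rw [mixT]
            exact Finset.sum_eq_zero fun l _ => hcol0 (z 0) (by omega) _
          rw [hz]
          simpa using hM0
        · rcases hincr (z 0) (by omega) (by omega) with hz | ⟨h, ε, hhb, hε, hform⟩
          · have hz' : mixT n fin fout (m:ℤ) c (z 0) (fun j => z j.succ) k = 0 := by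
              rw [mixT]
              apply Finset.sum_eq_zero
              intro l hl
              simp only [Finset.mem_Icc] at hl
              exact hz _ (update_mem_box hgb k ⟨hl.1, le_trans hl.2 (hgb k).2⟩)
            rw [hz']
            simpa using hM0
          · rcases Nat.eq_zero_or_pos (n-1) with hLz | hLp
            · have hz' : mixT n fin fout (m:ℤ) c (z 0) (fun j => z j.succ) k = 0 := by
                rw [mixT]
                apply Finset.sum_eq_zero
                intro l _
                rw [hform]
                rw [hLz]
                norm_num
              rw [hz']
              simpa using hM0
            · rw [← hdir] at hform
              have hAv : itA n h ((k:ℕ) + 1) = avgc n k (itA n h (k:ℕ)) := by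
                rw [itA_succ, dif_pos k.isLt]
              have hT : mixT n fin fout (m:ℤ) c (z 0) (fun j => z j.succ) k
                  = ε * ((1/((n-1:ℕ):ℝ)) * (∑ l ∈ Finset.Icc (1:ℤ) (z k.succ),
                      (avgc n k (itA n h (k:ℕ))
                        (Function.update (fun j => z j.succ) k l)
                      - itA n h (k:ℕ)
                        (Function.update (fun j => z j.succ) k l)))) := by
                rw [mixT, Finset.mul_sum, Finset.mul_sum]
                apply Finset.sum_congr rfl
                intro l _
                rw [hform, hAv]
              rw [hT]
              have hΦ := trans_sum_bound hn hM0 k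
                (itA_bound hn hhb (k:ℕ))
                (fun j _ => hgb j) (le_trans zero_le_one (hgb k).1) (hgb k).2
              have hε1 : |ε| = 1 := by rcases hε with rfl | rfl <;> simp
              rw [abs_mul, abs_mul, hε1, one_mul]
              have hL0 : (0:ℝ) < ((n-1:ℕ):ℝ) := by exact_mod_cast hLp
              rw [abs_of_nonneg (by positivity : (0:ℝ) ≤ 1/((n-1:ℕ):ℝ))]
              calc (1/((n-1:ℕ):ℝ)) * |∑ l ∈ Finset.Icc (1:ℤ) (z k.succ), _|
                  ≤ (1/((n-1:ℕ):ℝ)) * (((n-1:ℕ):ℝ) * M) := by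
                    apply mul_le_mul_of_nonneg_left hΦ (by positivity)
                _ = M := by
                    rw [← mul_assoc, one_div_mul_cancel (ne_of_gt hL0), one_mul]
      · simpa using hM0
  · -- (iii) boundary values
    intro y hy
    constructor
    · have hgate : 0 ≤ (Fin.cons (0:ℤ) y : Fin (d₀+1) → ℤ) 0
          ∧ (Fin.cons (0:ℤ) y : Fin (d₀+1) → ℤ) 0 < (m:ℤ)
          ∧ ∀ k : Fin d₀, 1 ≤ (Fin.cons (0:ℤ) y : Fin (d₀+1) → ℤ) k.succ
              ∧ (Fin.cons (0:ℤ) y : Fin (d₀+1) → ℤ) k.succ ≤ (n:ℤ) := by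
        simp only [Fin.cons_zero, Fin.cons_succ]
        exact ⟨le_refl 0, by omega, hy⟩
      rw [mixF_zero, if_pos hgate]
      simp only [Fin.cons_zero, Fin.cons_succ]
      rw [mixG, if_pos (by omega)]
      exact prof_zero n fin y
    · have hgate : 0 ≤ (Fin.cons ((m:ℤ)-1) y : Fin (d₀+1) → ℤ) 0
          ∧ (Fin.cons ((m:ℤ)-1) y : Fin (d₀+1) → ℤ) 0 < (m:ℤ)
          ∧ ∀ k : Fin d₀, 1 ≤ (Fin.cons ((m:ℤ)-1) y : Fin (d₀+1) → ℤ) k.succ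
              ∧ (Fin.cons ((m:ℤ)-1) y : Fin (d₀+1) → ℤ) k.succ ≤ (n:ℤ) := by
        simp only [Fin.cons_zero, Fin.cons_succ]
        exact ⟨by omega, by omega, hy⟩
      rw [mixF_zero, if_pos hgate]
      simp only [Fin.cons_zero, Fin.cons_succ]
      exact hlast y hy
  · -- (iv) node law
    intro z hz0 hzm
    rw [nodeLaw, Fin.sum_univ_succ]
    have hu00 : (unshift z 0) 0 = z 0 - 1 := by simp [unshift]
    have hu0s : ∀ j : Fin d₀, (unshift z 0) j.succ = z j.succ := by
      intro j
      simp [unshift, Fin.succ_ne_zero j]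
    have hu0f : (fun j : Fin d₀ => (unshift z 0) j.succ) = (fun j => z j.succ) :=
      funext hu0s
    have huk0 : ∀ k : Fin d₀, (unshift z k.succ) 0 = z 0 := by
      intro k
      simp [unshift, (Fin.succ_ne_zero k).symm]
    have huks : ∀ k j : Fin d₀, (unshift z k.succ) j.succ
        = Function.update (fun j' : Fin d₀ => z j'.succ) k (z k.succ - 1) j := by
      intro k j
      rcases eq_or_ne j k with rfl | hjk
      · simp [unshift, Function.update_self]
      · rw [Function.update_of_ne hjk]
        have hne : j.succ ≠ k.succ := fun h => hjk (Fin.succ_injective _ h)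
        simp [unshift, hne]
    have hukf : ∀ k : Fin d₀, (fun j : Fin d₀ => (unshift z k.succ) j.succ)
        = Function.update (fun j' : Fin d₀ => z j'.succ) k (z k.succ - 1) :=
      fun k => funext (huks k)
    by_cases hbox : ∀ k : Fin d₀, 1 ≤ z k.succ ∧ z k.succ ≤ (n:ℤ)
    · -- all transverse coordinates inside the box
      have ht0 : z 0 ≠ 0 := fun h => hz0 ⟨h, hbox⟩
      have htm : z 0 ≠ (m:ℤ) := fun h => hzm ⟨h, hbox⟩
      rcases lt_or_ge (z 0) 0 with hneg | h0
      · have e1 : mixF d₀ n fin fout (m:ℤ) c (z, 0) = 0 := by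
          rw [mixF_zero, if_neg]
          rintro ⟨h1, -, -⟩
          omega
        have e2 : mixF d₀ n fin fout (m:ℤ) c (unshift z 0, 0) = 0 := by
          rw [mixF_zero, if_neg]
          rintro ⟨h1, -, -⟩
          rw [hu00] at h1
          omega
        have e3 : ∀ k : Fin d₀, mixF d₀ n fin fout (m:ℤ) c (z, k.succ) = 0 := by
          intro k
          rw [mixF_succ, if_neg]
          rintro ⟨⟨h1, -, -⟩, -⟩
          omega
        have e4 : ∀ k : Fin d₀, mixF d₀ n fin fout (m:ℤ) c (unshift z k.succ, k.succ) = 0 := by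
          intro k
          rw [mixF_succ, if_neg]
          rintro ⟨⟨h1, -, -⟩, -⟩
          rw [huk0] at h1
          omega
        simp [e1, e2, e3, e4]
      rcases lt_or_ge (z 0) ((m:ℤ)) with hlt | hge
      swap
      · -- z 0 ≥ m, and ≠ m so ≥ m+1
        have hgt : (m:ℤ) + 1 ≤ z 0 := by omega
        have e1 : mixF d₀ n fin fout (m:ℤ) c (z, 0) = 0 := by
          rw [mixF_zero, if_neg]
          rintro ⟨-, h1, -⟩
          omega
        have e2 : mixF d₀ n fin fout (m:ℤ) c (unshift z 0, 0) = 0 := by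
          rw [mixF_zero, if_neg]
          rintro ⟨-, h1, -⟩
          rw [hu00] at h1
          omega
        have e3 : ∀ k : Fin d₀, mixF d₀ n fin fout (m:ℤ) c (z, k.succ) = 0 := by
          intro k
          rw [mixF_succ, if_neg]
          rintro ⟨⟨-, h1, -⟩, -⟩
          omega
        have e4 : ∀ k : Fin d₀, mixF d₀ n fin fout (m:ℤ) c (unshift z k.succ, k.succ) = 0 := by
          intro k
          rw [mixF_succ, if_neg]
          rintro ⟨⟨-, h1, -⟩, -⟩
          rw [huk0] at h1
          omega
        simp [e1, e2, e3, e4]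
      · -- interior column : 1 ≤ z 0 ≤ m - 1
        have ht1 : 1 ≤ z 0 := by omega
        have ht2 : z 0 ≤ (m:ℤ) - 1 := by omega
        have hgz : 0 ≤ z 0 ∧ z 0 < (m:ℤ)
            ∧ ∀ k : Fin d₀, 1 ≤ z k.succ ∧ z k.succ ≤ (n:ℤ) := ⟨by omega, by omega, hbox⟩
        have hgu : 0 ≤ (unshift z 0) 0 ∧ (unshift z 0) 0 < (m:ℤ)
            ∧ ∀ k : Fin d₀, 1 ≤ (unshift z 0) k.succ ∧ (unshift z 0) k.succ ≤ (n:ℤ) := by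
          refine ⟨by rw [hu00]; omega, by rw [hu00]; omega, ?_⟩
          intro k
          rw [hu0s]
          exact hbox k
        have e0 : mixF d₀ n fin fout (m:ℤ) c (z, 0)
              - mixF d₀ n fin fout (m:ℤ) c (unshift z 0, 0)
            = -(mixG n fin fout (m:ℤ) c (z 0 - 1) (fun j => z j.succ)
                - mixG n fin fout (m:ℤ) c (z 0) (fun j => z j.succ)) := by
          rw [mixF_zero, if_pos hgz, mixF_zero, if_pos hgu, hu00, hu0f]
          ring
        have etrans : ∀ k : Fin d₀,
            mixF d₀ n fin fout (m:ℤ) c (z, k.succ)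
              - mixF d₀ n fin fout (m:ℤ) c (unshift z k.succ, k.succ)
            = if (k:ℕ) = mixDir n (m:ℤ) c (z 0) then
                (mixG n fin fout (m:ℤ) c (z 0 - 1) (fun j => z j.succ)
                  - mixG n fin fout (m:ℤ) c (z 0) (fun j => z j.succ))
              else 0 := by
          intro k
          by_cases hdk : (k:ℕ) = mixDir n (m:ℤ) c (z 0)
          · rw [if_pos hdk, mixF_succ, if_pos ⟨hgz, hdk⟩, mixF_succ]
            have hsecond : (if (0 ≤ (unshift z k.succ) 0 ∧ (unshift z k.succ) 0 < (m:ℤ)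
                  ∧ ∀ j : Fin d₀, 1 ≤ (unshift z k.succ) j.succ
                      ∧ (unshift z k.succ) j.succ ≤ (n:ℤ))
                  ∧ (k:ℕ) = mixDir n (m:ℤ) c ((unshift z k.succ) 0)
                then mixT n fin fout (m:ℤ) c ((unshift z k.succ) 0)
                  (fun j => (unshift z k.succ) j.succ) k else 0)
                = mixT n fin fout (m:ℤ) c (z 0)
                    (Function.update (fun j' : Fin d₀ => z j'.succ) k (z k.succ - 1)) k := by
              by_cases hyk : 2 ≤ z k.succ
              · rw [if_pos, huk0, hukf]
                refine ⟨⟨by rw [huk0]; omega, by rw [huk0]; omega, ?_⟩, by rw [huk0]; exact hdk⟩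
                intro j
                rw [huks]
                rcases eq_or_ne j k with rfl | hjk
                · rw [Function.update_self]
                  have := hbox j
                  omega
                · rw [Function.update_of_ne hjk]
                  exact hbox j
              · have hyk1 : z k.succ = 1 := by
                  have := hbox k
                  omega
                have hz2 : mixT n fin fout (m:ℤ) c (z 0)
                    (Function.update (fun j' : Fin d₀ => z j'.succ) k (z k.succ - 1)) k = 0 := by
                  rw [mixT, Function.update_self]
                  have : Finset.Icc (1:ℤ) (z k.succ - 1) = ∅ := by
                    rw [Finset.Icc_eq_empty_iff]
                    omega
                  rw [this, Finset.sum_empty]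
                rw [hz2, if_neg]
                rintro ⟨⟨-, -, hbb⟩, -⟩
                have := hbb k
                rw [huks k k, Function.update_self] at this
                omega
            rw [hsecond]
            have := mixT_diff n fin fout (m:ℤ) c (z 0) (fun j => z j.succ) k (hbox k).1
            linarith [this]
          · rw [if_neg hdk, mixF_succ, if_neg (fun hc => hdk hc.2), mixF_succ, if_neg]
            · ring
            · rintro ⟨-, hdd⟩
              rw [huk0] at hdd
              exact hdk hdd
        rw [e0]
        have hrw : ∀ k : Fin d₀, (fun i : Fin d₀ =>
            mixF d₀ n fin fout (m:ℤ) c (z, i.succ)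
              - mixF d₀ n fin fout (m:ℤ) c (unshift z i.succ, i.succ)) k
            = if (k:ℕ) = mixDir n (m:ℤ) c (z 0) then
                (mixG n fin fout (m:ℤ) c (z 0 - 1) (fun j => z j.succ)
                  - mixG n fin fout (m:ℤ) c (z 0) (fun j => z j.succ))
              else 0 := etrans
        rw [Finset.sum_congr rfl (fun k _ => hrw k)]
        rcases lt_or_ge (mixDir n (m:ℤ) c (z 0)) d₀ with hdd | hdd
        · have hsum1 : ∑ k : Fin d₀,
              (if (k:ℕ) = mixDir n (m:ℤ) c (z 0) then
                (mixG n fin fout (m:ℤ) c (z 0 - 1) (fun j => z j.succ)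
                  - mixG n fin fout (m:ℤ) c (z 0) (fun j => z j.succ))
              else 0)
              = mixG n fin fout (m:ℤ) c (z 0 - 1) (fun j => z j.succ)
                  - mixG n fin fout (m:ℤ) c (z 0) (fun j => z j.succ) := by
            rw [Finset.sum_eq_single (⟨mixDir n (m:ℤ) c (z 0), hdd⟩ : Fin d₀)]
            · simp
            · intro k _ hk
              rw [if_neg]
              intro hkv
              exact hk (Fin.ext hkv)
            · intro hmem
              exact absurd (Finset.mem_univ _) hmem
          rw [hsum1]
          ring
        · have hsum0 : ∑ k : Fin d₀,
              (if (k:ℕ) = mixDir n (m:ℤ) c (z 0) then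
                (mixG n fin fout (m:ℤ) c (z 0 - 1) (fun j => z j.succ)
                  - mixG n fin fout (m:ℤ) c (z 0) (fun j => z j.succ))
              else 0) = 0 := by
            apply Finset.sum_eq_zero
            intro k _
            rw [if_neg]
            have := k.isLt
            omega
          rw [hsum0]
          have hD0 : mixG n fin fout (m:ℤ) c (z 0 - 1) (fun j => z j.succ)
              - mixG n fin fout (m:ℤ) c (z 0) (fun j => z j.succ) = 0 := by
            rcases hincr (z 0) ht1 ht2 with hz | ⟨h, ε, hhb, hε, hform⟩
            · exact hz _ hbox
            · rw [hform]
              rw [itA_ge h (mixDir n (m:ℤ) c (z 0) + 1) (by omega),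
                itA_ge h (mixDir n (m:ℤ) c (z 0)) (by omega)]
              ring
          rw [hD0]
          ring
    · -- some transverse coordinate outside the box
      have e1 : mixF d₀ n fin fout (m:ℤ) c (z, 0) = 0 := by
        rw [mixF_zero, if_neg (fun hc => hbox hc.2.2)]
      have e2 : mixF d₀ n fin fout (m:ℤ) c (unshift z 0, 0) = 0 := by
        rw [mixF_zero, if_neg]
        intro hc
        apply hbox
        intro k
        rw [← hu0s k]
        exact hc.2.2 k
      have e3 : ∀ k : Fin d₀, mixF d₀ n fin fout (m:ℤ) c (z, k.succ) = 0 := by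
        intro k
        rw [mixF_succ, if_neg (fun hc => hbox hc.1.2.2)]
      have e4 : ∀ k : Fin d₀, mixF d₀ n fin fout (m:ℤ) c (unshift z k.succ, k.succ) = 0 := by
        intro k
        rw [mixF_succ]
        split_ifs with hg
        · obtain ⟨⟨hg0, hgm, hgb⟩, hdk⟩ := hg
          rw [huk0] at hg0 hgm hdk
          have hjne : ∀ j : Fin d₀, j ≠ k → 1 ≤ z j.succ ∧ z j.succ ≤ (n:ℤ) := by
            intro j hj
            have := hgb j
            rw [huks k j, Function.update_of_ne hj] at this
            exact this
          have hk2 : 2 ≤ z k.succ ∧ z k.succ - 1 ≤ (n:ℤ) := by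
            have := hgb k
            rw [huks k k, Function.update_self] at this
            omega
          have hkn : z k.succ = (n:ℤ) + 1 := by
            by_contra hne
            apply hbox
            intro j
            rcases eq_or_ne j k with rfl | hj
            · omega
            · exact hjne j hj
          rw [huk0, hukf, mixT, Function.update_self]
          have hIcc : Finset.Icc (1:ℤ) (z k.succ - 1) = Finset.Icc (1:ℤ) (n:ℤ) := by
            rw [hkn]
            norm_num
          rw [hIcc]
          have hupd2 : ∀ l : ℤ, Function.update
              (Function.update (fun j' : Fin d₀ => z j'.succ) k (z k.succ - 1)) k l
              = Function.update (fun j' : Fin d₀ => z j'.succ) k l :=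
            fun l => Function.update_idem ..
          rw [Finset.sum_congr rfl (fun l _ => by rw [hupd2 l])]
          rcases lt_or_ge (0:ℤ) (z 0) with ht | ht
          swap
          · exact Finset.sum_eq_zero fun l _ => hcol0 (z 0) (by omega) _
          · rcases hincr (z 0) (by omega) (by omega) with hz | ⟨h, ε, hhb, hε, hform⟩
            · apply Finset.sum_eq_zero
              intro l hl
              simp only [Finset.mem_Icc] at hl
              apply hz
              intro j
              rcases eq_or_ne j k with rfl | hj
              · rw [Function.update_self]
                omega
              · rw [Function.update_of_ne hj]
                exact hjne j hj
            · rw [← hdk] at hform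
              have hAv : itA n h ((k:ℕ) + 1) = avgc n k (itA n h (k:ℕ)) := by
                rw [itA_succ, dif_pos k.isLt]
              have hstep : ∀ l : ℤ,
                  mixG n fin fout (m:ℤ) c (z 0 - 1)
                      (Function.update (fun j' : Fin d₀ => z j'.succ) k l)
                    - mixG n fin fout (m:ℤ) c (z 0)
                      (Function.update (fun j' : Fin d₀ => z j'.succ) k l)
                  = ε * ((1/((n-1:ℕ):ℝ)) *
                      (avgc n k (itA n h (k:ℕ))
                        (Function.update (fun j' : Fin d₀ => z j'.succ) k l)
                      - itA n h (k:ℕ)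
                        (Function.update (fun j' : Fin d₀ => z j'.succ) k l))) := by
                intro l
                rw [hform, hAv]
              rw [Finset.sum_congr rfl (fun l _ => hstep l), ← Finset.mul_sum]
              have hlz : ∑ l ∈ Finset.Icc (1:ℤ) (n:ℤ), (1/((n-1:ℕ):ℝ)) *
                  (avgc n k (itA n h (k:ℕ))
                    (Function.update (fun j' : Fin d₀ => z j'.succ) k l)
                  - itA n h (k:ℕ)
                    (Function.update (fun j' : Fin d₀ => z j'.succ) k l)) = 0 := by
                rw [← Finset.mul_sum, line_sum_diff_zero hn k]
                ring
              rw [hlz]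
              ring
        · rfl
      simp [e1, e2, e3, e4]

/-- Lemma 4.1, mixing.  `d = d₀ + 1 ≥ 2`.  For inputs and outputs
bounded by `M` with equal total sums, a mixing stream exists in `[0,m) × [1,n]^{d-1}` for
every `m ≥ 2(d-1)n`; if moreover the outputs are uniform, such a stream exists for every
`m ≥ (d-1)n`. -/
theorem statement16 (d₀ : ℕ) (hd : 1 ≤ d₀) (M : ℝ) (hM : 0 < M) (n : ℕ) (hn : 1 ≤ n)
    (fin fout : (Fin d₀ → ℤ) → ℝ)
    (hfin : ∀ y : Fin d₀ → ℤ, (∀ k, 1 ≤ y k ∧ y k ≤ (n : ℤ)) → |fin y| ≤ M)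
    (hfout : ∀ y : Fin d₀ → ℤ, (∀ k, 1 ≤ y k ∧ y k ≤ (n : ℤ)) → |fout y| ≤ M)
    (hsum : ∑ y ∈ boxIdx d₀ n, fin y = ∑ y ∈ boxIdx d₀ n, fout y)
    (m : ℕ) :
    (2 * d₀ * n ≤ m → ∃ F : Streamm (d₀ + 1), mixProp d₀ M n m fin fout F) ∧
    ((d₀ * n ≤ m ∧ ∀ y : Fin d₀ → ℤ, (∀ k, 1 ≤ y k ∧ y k ≤ (n : ℤ)) →
        fout y = (1 / (n : ℝ) ^ d₀) * ∑ z ∈ boxIdx d₀ n, fin z) →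
      ∃ F : Streamm (d₀ + 1), mixProp d₀ M n m fin fout F) := by
  have key : d₀ * (n-1) + d₀ = d₀ * n := by
    obtain ⟨n', rfl⟩ : ∃ n', n = n' + 1 := ⟨n-1, by omega⟩
    simp only [Nat.add_sub_cancel]
    ring
  constructor
  · intro hm2
    have hm : 1 ≤ m := le_trans (by nlinarith) hm2
    refine ⟨mixF d₀ n fin fout (m:ℤ) ((m:ℤ) - 1 - ((d₀*(n-1):ℕ):ℤ)), ?_⟩
    apply mix_main d₀ hd M hM n hn fin fout hfin hfout hsum m hm
      ((m:ℤ) - 1 - ((d₀*(n-1):ℕ):ℤ))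
    · have h2 : 2 * (d₀ * (n-1)) + 2 ≤ m := by
        have h3 : 2*d₀*n = 2*(d₀*(n-1)) + 2*d₀ := by
          have h5 : 2*d₀*n = 2*(d₀*n) := by ring
          omega
        omega
      omega
    · intro hcle
      omega
    · intro y hy
      rw [mixG, if_neg (by omega)]
      have h4 : ((m:ℤ) - 1 - ((m:ℤ)-1)).toNat = 0 := by omega
      rw [h4]
      exact prof_zero n fout y
  · rintro ⟨hm1, huni⟩
    have hm : 1 ≤ m := le_trans (by nlinarith) hm1
    refine ⟨mixF d₀ n fin fout (m:ℤ) (m:ℤ), ?_⟩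
    apply mix_main d₀ hd M hM n hn fin fout hfin hfout hsum m hm (m:ℤ)
    · omega
    · intro hcle
      omega
    · intro y hy
      rw [mixG, if_pos (by omega)]
      have hend : d₀ * (n-1) ≤ ((m:ℤ)-1).toNat := by omega
      rw [prof_end hn fin hend hy, itA_top hn fin y, huni y hy]
      ring


end FPP
end
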